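/- Let d : ℝ → ℝ be an additive function, let I be a nonempty open interval with 0 ∉ I, and let P, Q : I → ℝ be Laurent polynomials P(u) = Σ_{k∈ℤ} p_k u^k, Q(u) = Σ_{k∈ℤ} q_k u^k with rational coefficients, only finitely many of which are nonzero. Assume Q' is nowhere zero on I (so Q is injective on I with differentiable inverse Q⁻¹ on J := Q(I)), that P - p₀ and Q - q₀ are linearly independent, and that d derivates P ∘ Q⁻¹ on J, i.e., d(P(Q⁻¹(v))) = P'(Q⁻¹(v))·(1/Q'(Q⁻¹(v)))·d(v) for all v ∈ J. Then d is a standard derivation. -/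

import Mathlib

open Finset Polynomial

private lemma d_rat_smul (d : ℝ → ℝ) (hd : ∀ x y : ℝ, d (x + y) = d x + d y)
    (r : ℚ) (x : ℝ) : d ((r : ℝ) * x) = (r : ℝ) * d x := by
  have hD : ∀ (c : ℚ) (y : ℝ), (AddMonoidHom.mk' d hd) (c • y) = c • ((AddMonoidHom.mk' d hd) y) :=
    fun c y => map_rat_smul (AddMonoidHom.mk' d hd) c y
  simpa [Rat.smul_def, smul_eq_mul] using hD r x

private lemma leibniz_of_sq (d : ℝ → ℝ) (hd : ∀ x y : ℝ, d (x + y) = d x + d y)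
    (hsq : ∀ x : ℝ, d (x * x) = x * d x + x * d x) :
    ∀ x y : ℝ, d (x * y) = d x * y + x * d y := by
  intro x y
  have h := hsq (x + y)
  have e1 : (x + y) * (x + y) = x * x + (x * y + (x * y + y * y)) := by ring
  rw [e1, hd, hd, hd, hd, hsq x, hsq y] at h
  nlinarith [h]

private lemma laurent_coeff_zero (t : Finset ℤ) (c : ℤ → ℝ) (S : Set ℝ)
    (hS : S.Infinite) (hS0 : ∀ x ∈ S, x ≠ 0)
    (h : ∀ x ∈ S, ∑ n ∈ t, c n * x ^ n = 0) : ∀ n ∈ t, c n = 0 := by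
  rcases t.eq_empty_or_nonempty with rfl | hne
  · simp
  have hmin := t.min'_le
  set B : ℤ := -(t.min' hne) with hB
  have hnn : ∀ n ∈ t, 0 ≤ n + B := fun n hn => by
    have := hmin n hn; omega
  set f : ℝ[X] := ∑ n ∈ t, C (c n) * X ^ (n + B).toNat with hf
  have hf0 : f = 0 := by
    apply eq_zero_of_infinite_isRoot
    apply hS.mono
    intro x hx
    have hx0 := hS0 x hx
    simp only [Set.mem_setOf_eq, IsRoot, hf, eval_finset_sum, eval_mul, eval_C, eval_pow, eval_X]
    have : ∀ n ∈ t, c n * x ^ (n + B).toNat = (c n * x ^ n) * x ^ B := by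
      intro n hn
      have h1 : (x : ℝ) ^ (n + B).toNat = x ^ ((n + B).toNat : ℤ) := (zpow_natCast x _).symm
      rw [h1, Int.toNat_of_nonneg (hnn n hn), zpow_add₀ hx0]
      ring
    rw [Finset.sum_congr rfl this, ← Finset.sum_mul, h x hx, zero_mul]
  intro n hn
  have hcoeff : f.coeff (n + B).toNat = c n := by
    rw [hf, finset_sum_coeff]
    rw [Finset.sum_eq_single n]
    · simp
    · intro m hm hmn
      have h1 := hnn m hm
      have h2 := hnn n hn
      have hne2 : (n + B).toNat ≠ (m + B).toNat := by
        intro hc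
        apply hmn
        omega
      simp only [coeff_C_mul, coeff_X_pow, if_neg hne2, mul_zero]
    · intro hnn'; exact absurd hn hnn'
  rw [hf0] at hcoeff
  simpa using hcoeff.symm

private lemma nat_coeff_zero (t : Finset ℕ) (c : ℕ → ℝ) (S : Set ℝ)
    (hS : S.Infinite)
    (h : ∀ x ∈ S, ∑ n ∈ t, c n * x ^ n = 0) : ∀ n ∈ t, c n = 0 := by
  set f : ℝ[X] := ∑ n ∈ t, C (c n) * X ^ n with hf
  have hf0 : f = 0 := by
    apply eq_zero_of_infinite_isRoot
    apply hS.mono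
    intro x hx
    simp only [Set.mem_setOf_eq, IsRoot, hf, eval_finset_sum, eval_mul, eval_C, eval_pow, eval_X]
    exact h x hx
  intro n hn
  have hcoeff : f.coeff n = c n := by
    rw [hf, finset_sum_coeff]
    rw [Finset.sum_eq_single n]
    · simp
    · intro m hm hmn
      simp [coeff_C_mul, coeff_X_pow, if_neg (Ne.symm hmn)]
    · intro hnn'; exact absurd hn hnn'
  rw [hf0] at hcoeff
  simpa using hcoeff.symm

private lemma exists_infinite_rat (c e : ℝ) (h : c < e) :
    ∃ S : Set ℝ, S.Infinite ∧ (∀ x ∈ S, ∃ r : ℚ, (r : ℝ) = x) ∧ S ⊆ Set.Ioo c e := by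
  obtain ⟨r1, hr1, hr1'⟩ := exists_rat_btwn h
  obtain ⟨r2, hr2, hr2'⟩ := exists_rat_btwn hr1'
  refine ⟨(fun q : ℚ => (q : ℝ)) '' Set.Ioo r1 r2, ?_, ?_, ?_⟩
  · have hinf : (Set.Ioo r1 r2).Infinite := Set.Ioo_infinite (by exact_mod_cast hr2)
    exact hinf.image (fun x _ y _ hxy => by exact_mod_cast hxy)
  · rintro x ⟨q, _, rfl⟩; exact ⟨q, rfl⟩
  · rintro x ⟨q, ⟨hq1, hq2⟩, rfl⟩
    constructor
    · calc c < (r1:ℝ) := hr1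
        _ < (q:ℝ) := by exact_mod_cast hq1
    · calc ((q:ℚ):ℝ) < (r2:ℝ) := by exact_mod_cast hq2
        _ < e := hr2'

private lemma scale_into (a b u : ℝ) (hab : a < b) (hu : u ≠ 0) :
    ∃ lo hi : ℝ, lo < hi ∧ ∀ x : ℝ, x ∈ Set.Ioo lo hi → x * u ∈ Set.Ioo a b := by
  rcases lt_or_gt_of_ne hu with hneg | hpos
  · refine ⟨b * u⁻¹, a * u⁻¹, ?_, ?_⟩
    · exact mul_lt_mul_of_neg_right hab (inv_neg''.mpr hneg)
    · intro x hx
      constructor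
      · have := mul_lt_mul_of_neg_right hx.2 hneg
        rwa [mul_assoc, inv_mul_cancel₀ hu, mul_one] at this
      · have := mul_lt_mul_of_neg_right hx.1 hneg
        rwa [mul_assoc, inv_mul_cancel₀ hu, mul_one] at this
  · refine ⟨a * u⁻¹, b * u⁻¹, ?_, ?_⟩
    · exact mul_lt_mul_of_pos_right hab (inv_pos.mpr hpos)
    · intro x hx
      constructor
      · have := mul_lt_mul_of_pos_right hx.1 hpos
        rwa [mul_assoc, inv_mul_cancel₀ hu, mul_one] at this
      · have := mul_lt_mul_of_pos_right hx.2 hpos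
        rwa [mul_assoc, inv_mul_cancel₀ hu, mul_one] at this

private lemma star_lemma (d : ℝ → ℝ) (hd : ∀ x y : ℝ, d (x + y) = d x + d y)
    (a b : ℝ) (hab : a < b) (h0 : (0 : ℝ) ∉ Set.Ioo a b)
    (p q : ℤ → ℚ) (s : Finset ℤ)
    (hE : ∀ u ∈ Set.Ioo a b,
      (∑ k ∈ s, (p k : ℝ) * d (u ^ k)) * (∑ j ∈ s, (q j : ℝ) * (j : ℝ) * u ^ (j - 1))
        = (∑ k ∈ s, (p k : ℝ) * (k : ℝ) * u ^ (k - 1)) * (∑ j ∈ s, (q j : ℝ) * d (u ^ j))) :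
    ∀ v : ℝ, v ≠ 0 → ∀ n : ℤ,
      ∑ kj ∈ (s ×ˢ s).filter (fun kj => kj.1 + kj.2 - 1 = n),
        ((p kj.1 : ℝ) * (q kj.2 : ℝ)) *
          ((kj.2 : ℝ) * v ^ (kj.2 - 1) * d (v ^ kj.1)
            - (kj.1 : ℝ) * v ^ (kj.1 - 1) * d (v ^ kj.2)) = 0 := by
  -- the vanishing of each graded coefficient at points of the interval
  have main : ∀ u ∈ Set.Ioo a b, ∀ n : ℤ,
      ∑ kj ∈ (s ×ˢ s).filter (fun kj => kj.1 + kj.2 - 1 = n),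
        ((p kj.1 : ℝ) * (q kj.2 : ℝ)) *
          ((kj.2 : ℝ) * u ^ (kj.2 - 1) * d (u ^ kj.1)
            - (kj.1 : ℝ) * u ^ (kj.1 - 1) * d (u ^ kj.2)) = 0 := by
    intro u hu n
    have hu0 : u ≠ 0 := fun h => h0 (h ▸ hu)
    set W : ℤ × ℤ → ℝ := fun kj =>
      ((p kj.1 : ℝ) * (q kj.2 : ℝ)) *
        ((kj.2 : ℝ) * u ^ (kj.2 - 1) * d (u ^ kj.1)
          - (kj.1 : ℝ) * u ^ (kj.1 - 1) * d (u ^ kj.2)) with hW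
    -- the scaled functional equation
    have key : ∀ r : ℚ, (r : ℝ) * u ∈ Set.Ioo a b →
        ∑ kj ∈ s ×ˢ s, W kj * (r : ℝ) ^ (kj.1 + kj.2 - 1) = 0 := by
      intro r hru
      have hr0 : (r : ℝ) ≠ 0 := by
        intro h; rw [h, zero_mul] at hru; exact h0 hru
      have hE' := hE _ hru
      have e1 : ∑ k ∈ s, (p k : ℝ) * d (((r : ℝ) * u) ^ k)
          = ∑ k ∈ s, (p k : ℝ) * ((r : ℝ) ^ k * d (u ^ k)) := by
        refine Finset.sum_congr rfl fun k _ => ?_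
        rw [mul_zpow, ← Rat.cast_zpow, d_rat_smul d hd, Rat.cast_zpow]
      have e2 : ∑ j ∈ s, (q j : ℝ) * (j : ℝ) * ((r : ℝ) * u) ^ (j - 1)
          = ∑ j ∈ s, (q j : ℝ) * (j : ℝ) * ((r : ℝ) ^ (j - 1) * u ^ (j - 1)) := by
        refine Finset.sum_congr rfl fun j _ => ?_
        rw [mul_zpow]
      have e3 : ∑ k ∈ s, (p k : ℝ) * (k : ℝ) * ((r : ℝ) * u) ^ (k - 1)
          = ∑ k ∈ s, (p k : ℝ) * (k : ℝ) * ((r : ℝ) ^ (k - 1) * u ^ (k - 1)) := by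
        refine Finset.sum_congr rfl fun k _ => ?_
        rw [mul_zpow]
      have e4 : ∑ j ∈ s, (q j : ℝ) * d (((r : ℝ) * u) ^ j)
          = ∑ j ∈ s, (q j : ℝ) * ((r : ℝ) ^ j * d (u ^ j)) := by
        refine Finset.sum_congr rfl fun j _ => ?_
        rw [mul_zpow, ← Rat.cast_zpow, d_rat_smul d hd, Rat.cast_zpow]
      rw [e1, e2, e3, e4, Finset.sum_mul_sum, Finset.sum_mul_sum] at hE'
      have expand : ∑ kj ∈ s ×ˢ s, W kj * (r : ℝ) ^ (kj.1 + kj.2 - 1)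
          = (∑ k ∈ s, ∑ j ∈ s, ((p k : ℝ) * ((r : ℝ) ^ k * d (u ^ k))) *
              ((q j : ℝ) * (j : ℝ) * ((r : ℝ) ^ (j - 1) * u ^ (j - 1))))
            - (∑ k ∈ s, ∑ j ∈ s, ((p k : ℝ) * (k : ℝ) * ((r : ℝ) ^ (k - 1) * u ^ (k - 1))) *
              ((q j : ℝ) * ((r : ℝ) ^ j * d (u ^ j)))) := by
        rw [Finset.sum_product]
        rw [← Finset.sum_sub_distrib]
        refine Finset.sum_congr rfl fun k _ => ?_
        rw [← Finset.sum_sub_distrib]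
        refine Finset.sum_congr rfl fun j _ => ?_
        have hkj1 : (r : ℝ) ^ (k + j - 1) = (r : ℝ) ^ k * (r : ℝ) ^ (j - 1) := by
          rw [← zpow_add₀ hr0]; congr 1; ring
        have hkj2 : (r : ℝ) ^ (k + j - 1) = (r : ℝ) ^ (k - 1) * (r : ℝ) ^ j := by
          rw [← zpow_add₀ hr0]; congr 1; ring
        have t1 : ((p k : ℝ) * (q j : ℝ)) * ((j : ℝ) * u ^ (j - 1) * d (u ^ k)) * ((r:ℝ) ^ (k + j - 1))
            = ((p k : ℝ) * ((r : ℝ) ^ k * d (u ^ k))) *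
              ((q j : ℝ) * (j : ℝ) * ((r : ℝ) ^ (j - 1) * u ^ (j - 1))) := by
          rw [hkj1]; ring
        have t2 : ((p k : ℝ) * (q j : ℝ)) * ((k : ℝ) * u ^ (k - 1) * d (u ^ j)) * ((r:ℝ) ^ (k + j - 1))
            = ((p k : ℝ) * (k : ℝ) * ((r : ℝ) ^ (k - 1) * u ^ (k - 1))) *
              ((q j : ℝ) * ((r : ℝ) ^ j * d (u ^ j))) := by
          rw [hkj2]; ring
        calc W (k, j) * (r : ℝ) ^ ((k, j).1 + (k, j).2 - 1)
            = ((p k : ℝ) * (q j : ℝ)) * ((j : ℝ) * u ^ (j - 1) * d (u ^ k)) * ((r:ℝ) ^ (k + j - 1))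
              - ((p k : ℝ) * (q j : ℝ)) * ((k : ℝ) * u ^ (k - 1) * d (u ^ j)) * ((r:ℝ) ^ (k + j - 1)) := by
              rw [hW]; ring
          _ = _ := by rw [t1, t2]
      rw [expand, hE', sub_self]
    -- group by the exponent and extract coefficients
    set t : Finset ℤ := (s ×ˢ s).image (fun kj => kj.1 + kj.2 - 1) with ht
    set c : ℤ → ℝ := fun m => ∑ kj ∈ (s ×ˢ s).filter (fun kj => kj.1 + kj.2 - 1 = m), W kj with hc
    obtain ⟨lo, hi, hlohi, hmap⟩ := scale_into a b u hab hu0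
    obtain ⟨S, hSinf, hSrat, hSsub⟩ := exists_infinite_rat lo hi hlohi
    have hcoeffs : ∀ m ∈ t, c m = 0 := by
      apply laurent_coeff_zero t c S hSinf
      · intro x hx
        obtain ⟨r, rfl⟩ := hSrat x hx
        intro h
        have := hmap _ (hSsub hx)
        rw [h, zero_mul] at this; exact h0 this
      · intro x hx
        obtain ⟨r, rfl⟩ := hSrat x hx
        have hru := hmap _ (hSsub hx)
        have hkey := key r hru
        rw [← hkey]
        rw [← Finset.sum_fiberwise_of_maps_to (g := fun kj => kj.1 + kj.2 - 1)
          (fun kj hkj => Finset.mem_image_of_mem _ hkj) (fun kj => W kj * (r:ℝ) ^ (kj.1 + kj.2 - 1))]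
        refine Finset.sum_congr rfl fun m hm => ?_
        rw [hc, Finset.sum_mul]
        refine Finset.sum_congr rfl fun kj hkj => ?_
        have := (Finset.mem_filter.mp hkj).2
        rw [this]
    by_cases hm : n ∈ t
    · simpa [hc] using hcoeffs n hm
    · have hemp : (s ×ˢ s).filter (fun kj => kj.1 + kj.2 - 1 = n) = ∅ := by
        rw [Finset.filter_eq_empty_iff]
        intro kj hkj hcontra
        exact hm (ht ▸ Finset.mem_image.mpr ⟨kj, hkj, hcontra⟩)
      rw [show (filter (fun kj => kj.1 + kj.2 - 1 = n) (s ×ˢ s)).sum W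
          = ∑ kj ∈ (s ×ˢ s).filter (fun kj => kj.1 + kj.2 - 1 = n), W kj from rfl, hemp]
      simp
  -- extension to all nonzero reals
  intro v hv n
  obtain ⟨lo, hi, hlohi, hmap⟩ := scale_into a b v hab hv
  obtain ⟨r, hr1, hr2⟩ := exists_rat_btwn hlohi
  have hrv : (r : ℝ) * v ∈ Set.Ioo a b := hmap _ ⟨hr1, hr2⟩
  have hr0 : (r : ℝ) ≠ 0 := by
    intro h; rw [h, zero_mul] at hrv; exact h0 hrv
  have h1 := main _ hrv n
  have h2 : ∑ kj ∈ (s ×ˢ s).filter (fun kj => kj.1 + kj.2 - 1 = n),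
      ((p kj.1 : ℝ) * (q kj.2 : ℝ)) *
        ((kj.2 : ℝ) * ((r:ℝ)*v) ^ (kj.2 - 1) * d (((r:ℝ)*v) ^ kj.1)
          - (kj.1 : ℝ) * ((r:ℝ)*v) ^ (kj.1 - 1) * d (((r:ℝ)*v) ^ kj.2))
      = (r : ℝ) ^ n * ∑ kj ∈ (s ×ˢ s).filter (fun kj => kj.1 + kj.2 - 1 = n),
      ((p kj.1 : ℝ) * (q kj.2 : ℝ)) *
        ((kj.2 : ℝ) * v ^ (kj.2 - 1) * d (v ^ kj.1)
          - (kj.1 : ℝ) * v ^ (kj.1 - 1) * d (v ^ kj.2)) := by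
    rw [Finset.mul_sum]
    refine Finset.sum_congr rfl fun kj hkj => ?_
    obtain ⟨k, j⟩ := kj
    have hn : k + j - 1 = n := (Finset.mem_filter.mp hkj).2
    have ek : d (((r:ℝ)*v) ^ k) = (r:ℝ) ^ k * d (v ^ k) := by
      rw [mul_zpow, ← Rat.cast_zpow, d_rat_smul d hd, Rat.cast_zpow]
    have ej : d (((r:ℝ)*v) ^ j) = (r:ℝ) ^ j * d (v ^ j) := by
      rw [mul_zpow, ← Rat.cast_zpow, d_rat_smul d hd, Rat.cast_zpow]
    have hkj1 : (r : ℝ) ^ n = (r : ℝ) ^ k * (r : ℝ) ^ (j - 1) := by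
      rw [← zpow_add₀ hr0]; congr 1; omega
    have hkj2 : (r : ℝ) ^ n = (r : ℝ) ^ (k - 1) * (r : ℝ) ^ j := by
      rw [← zpow_add₀ hr0]; congr 1; omega
    rw [ek, ej, mul_zpow, mul_zpow]
    have t1 : ((p k : ℝ) * (q j : ℝ)) * ((j:ℝ) * ((r:ℝ)^(j-1) * v^(j-1)) * ((r:ℝ)^k * d (v^k)))
        = (r:ℝ)^n * (((p k : ℝ) * (q j : ℝ)) * ((j:ℝ) * v^(j-1) * d (v^k))) := by
      rw [hkj1]; ring
    have t2 : ((p k : ℝ) * (q j : ℝ)) * ((k:ℝ) * ((r:ℝ)^(k-1) * v^(k-1)) * ((r:ℝ)^j * d (v^j)))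
        = (r:ℝ)^n * (((p k : ℝ) * (q j : ℝ)) * ((k:ℝ) * v^(k-1) * d (v^j))) := by
      rw [hkj2]; ring
    calc ((p k : ℝ) * (q j : ℝ)) *
          ((j:ℝ) * ((r:ℝ)^(j-1) * v^(j-1)) * ((r:ℝ)^k * d (v^k))
            - (k:ℝ) * ((r:ℝ)^(k-1) * v^(k-1)) * ((r:ℝ)^j * d (v^j)))
        = ((p k : ℝ) * (q j : ℝ)) * ((j:ℝ) * ((r:ℝ)^(j-1) * v^(j-1)) * ((r:ℝ)^k * d (v^k)))
          - ((p k : ℝ) * (q j : ℝ)) * ((k:ℝ) * ((r:ℝ)^(k-1) * v^(k-1)) * ((r:ℝ)^j * d (v^j))) := by ring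
      _ = (r:ℝ)^n * (((p k : ℝ) * (q j : ℝ)) * ((j:ℝ) * v^(j-1) * d (v^k)))
          - (r:ℝ)^n * (((p k : ℝ) * (q j : ℝ)) * ((k:ℝ) * v^(k-1) * d (v^j))) := by rw [t1, t2]
      _ = (r:ℝ)^n * (((p k : ℝ) * (q j : ℝ)) * ((j:ℝ) * v^(j-1) * d (v^k) - (k:ℝ) * v^(k-1) * d (v^j))) := by ring
  rw [h2] at h1
  rcases mul_eq_zero.mp h1 with h | h
  · exact absurd h (zpow_ne_zero _ hr0)
  · exact h

section

variable (d : ℝ → ℝ)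

private lemma sum_expand (c : ℤ → ℚ) (hc : (Function.support c).Finite)
    (s : Finset ℤ) (hsub : hc.toFinset ⊆ s) (u : ℝ) :
    ∑ᶠ k : ℤ, (c k : ℝ) * u ^ k = ∑ k ∈ s, (c k : ℝ) * u ^ k := by
  apply finsum_eq_sum_of_support_subset
  intro k hk
  have : c k ≠ 0 := by
    intro h
    apply hk
    simp [h]
  exact hsub (by simpa [Set.Finite.mem_toFinset, Function.mem_support] using this)

private lemma sum_expand' (c : ℤ → ℚ) (hc : (Function.support c).Finite)
    (s : Finset ℤ) (hsub : hc.toFinset ⊆ s) (u : ℝ) :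
    ∑ᶠ k : ℤ, (c k : ℝ) * (k : ℝ) * u ^ (k - 1) = ∑ k ∈ s, (c k : ℝ) * (k : ℝ) * u ^ (k - 1) := by
  apply finsum_eq_sum_of_support_subset
  intro k hk
  have : c k ≠ 0 := by
    intro h
    apply hk
    simp [h]
  exact hsub (by simpa [Set.Finite.mem_toFinset, Function.mem_support] using this)

private lemma d_sum_expand (hd : ∀ x y : ℝ, d (x + y) = d x + d y) (c : ℤ → ℚ) (s : Finset ℤ) (u : ℝ) :
    d (∑ k ∈ s, (c k : ℝ) * u ^ k) = ∑ k ∈ s, (c k : ℝ) * d (u ^ k) := by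
  have h1 : d (∑ k ∈ s, (c k : ℝ) * u ^ k) = ∑ k ∈ s, d ((c k : ℝ) * u ^ k) :=
    map_sum (AddMonoidHom.mk' d hd) _ s
  rw [h1]
  exact Finset.sum_congr rfl fun k _ => d_rat_smul d hd (c k) (u ^ k)

end

private lemma derive_hE (d : ℝ → ℝ) (hd : ∀ x y : ℝ, d (x + y) = d x + d y)
    (a b : ℝ) (h0 : (0 : ℝ) ∉ Set.Ioo a b)
    (p q : ℤ → ℚ) (hp : (Function.support p).Finite) (hq : (Function.support q).Finite)
    (P Q P' Q' Qinv : ℝ → ℝ)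
    (hP : ∀ u : ℝ, P u = ∑ᶠ k : ℤ, (p k : ℝ) * u ^ k)
    (hQ : ∀ u : ℝ, Q u = ∑ᶠ k : ℤ, (q k : ℝ) * u ^ k)
    (hP' : ∀ u : ℝ, P' u = ∑ᶠ k : ℤ, (p k : ℝ) * (k : ℝ) * u ^ (k - 1))
    (hQ' : ∀ u : ℝ, Q' u = ∑ᶠ k : ℤ, (q k : ℝ) * (k : ℝ) * u ^ (k - 1))
    (hQ'ne : ∀ u ∈ Set.Ioo a b, Q' u ≠ 0)
    (hQinv : ∀ u ∈ Set.Ioo a b, Qinv (Q u) = u)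
    (hder : ∀ v ∈ Q '' Set.Ioo a b,
      d (P (Qinv v)) = P' (Qinv v) * (1 / Q' (Qinv v)) * d v) :
    ∀ (s : Finset ℤ), hp.toFinset ⊆ s → hq.toFinset ⊆ s →
    ∀ u ∈ Set.Ioo a b,
      (∑ k ∈ s, (p k : ℝ) * d (u ^ k)) *
          (∑ j ∈ s, (q j : ℝ) * (j : ℝ) * u ^ (j - 1))
        = (∑ k ∈ s, (p k : ℝ) * (k : ℝ) * u ^ (k - 1)) *
          (∑ j ∈ s, (q j : ℝ) * d (u ^ j)) := by
  intro s hps hqs u hu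
  have h1 := hder (Q u) ⟨u, hu, rfl⟩
  rw [hQinv u hu] at h1
  -- h1 : d (P u) = P' u * (1 / Q' u) * d (Q u)
  have hQne : Q' u ≠ 0 := hQ'ne u hu
  have h2 : d (P u) * Q' u = P' u * d (Q u) := by
    rw [h1]
    field_simp
  have hPu : d (P u) = ∑ k ∈ s, (p k : ℝ) * d (u ^ k) := by
    rw [hP u, sum_expand p hp s hps u, d_sum_expand d hd]
  have hQu : d (Q u) = ∑ j ∈ s, (q j : ℝ) * d (u ^ j) := by
    rw [hQ u, sum_expand q hq s hqs u, d_sum_expand d hd]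
  have hP'u : P' u = ∑ k ∈ s, (p k : ℝ) * (k : ℝ) * u ^ (k - 1) := by
    rw [hP' u, sum_expand' p hp s hps u]
  have hQ'u : Q' u = ∑ j ∈ s, (q j : ℝ) * (j : ℝ) * u ^ (j - 1) := by
    rw [hQ' u, sum_expand' q hq s hqs u]
  rw [hPu, hQu, hP'u, hQ'u] at h2
  exact h2

private lemma w_trans (p q : ℤ → ℚ) (k₁ k j : ℤ)
    (h1 : p k₁ ≠ 0 ∨ q k₁ ≠ 0)
    (h2 : p k₁ * q k - p k * q k₁ = 0) (h3 : p k₁ * q j - p j * q k₁ = 0) :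
    p k * q j - p j * q k = 0 := by
  rcases h1 with h1 | h1
  · have key : p k₁ * (p k * q j - p j * q k)
        = (p k₁ * q j - p j * q k₁) * p k - (p k₁ * q k - p k * q k₁) * p j := by ring
    rw [h2, h3] at key
    simp only [zero_mul, sub_zero] at key
    exact (mul_eq_zero.mp key).resolve_left h1
  · have key : q k₁ * (p k * q j - p j * q k)
        = (p k₁ * q k - p k * q k₁) * (- q j) + (p k₁ * q j - p j * q k₁) * q k := by ring
    rw [h2, h3] at key
    simp only [zero_mul, zero_add] at key
    exact (mul_eq_zero.mp key).resolve_left h1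

private lemma exists_pair (a b : ℝ) (hab : a < b)
    (p q : ℤ → ℚ) (hp : (Function.support p).Finite) (hq : (Function.support q).Finite)
    (P Q : ℝ → ℝ)
    (hP : ∀ u : ℝ, P u = ∑ᶠ k : ℤ, (p k : ℝ) * u ^ k)
    (hQ : ∀ u : ℝ, Q u = ∑ᶠ k : ℤ, (q k : ℝ) * u ^ k)
    (hindep : ¬ ∃ c₁ c₂ : ℝ, (c₁, c₂) ≠ (0, 0) ∧ ∀ u ∈ Set.Ioo a b,
      c₁ * (P u - (p 0 : ℝ)) + c₂ * (Q u - (q 0 : ℝ)) = 0) :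
    ∃ k l : ℤ, k ≠ 0 ∧ l ≠ 0 ∧ p k * q l - p l * q k ≠ 0 := by
  by_contra hcon
  push_neg at hcon
  apply hindep
  by_cases hcase : ∀ k : ℤ, k ≠ 0 → p k = 0
  · refine ⟨1, 0, by simp, ?_⟩
    intro u hu
    have hPu : P u = (p 0 : ℝ) := by
      rw [hP u]
      rw [finsum_eq_single (fun k => (p k : ℝ) * u ^ k) 0 ?_]
      · simp
      · intro k hk
        simp [hcase k hk]
    rw [hPu]; ring
  · push_neg at hcase
    obtain ⟨k₀, hk₀, hpk₀⟩ := hcase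
    set c₁ : ℚ := q k₀ / p k₀ with hc₁
    refine ⟨(c₁ : ℝ), -1, by simp, ?_⟩
    intro u hu
    set s : Finset ℤ := hp.toFinset ∪ hq.toFinset with hs
    have hPu : P u = ∑ k ∈ s, (p k : ℝ) * u ^ k := by
      rw [hP u]
      apply finsum_eq_sum_of_support_subset
      intro k hk
      have : p k ≠ 0 := fun h => by simp [h] at hk
      simp only [hs, Finset.coe_union, Set.mem_union, Finset.mem_coe,
        Set.Finite.coe_toFinset, Function.mem_support]
      left
      exact this
    have hQu : Q u = ∑ k ∈ s, (q k : ℝ) * u ^ k := by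
      rw [hQ u]
      apply finsum_eq_sum_of_support_subset
      intro k hk
      have : q k ≠ 0 := fun h => by simp [h] at hk
      simp only [hs, Finset.coe_union, Set.mem_union, Finset.mem_coe,
        Set.Finite.coe_toFinset, Function.mem_support]
      right
      exact this
    have hterm : ∀ k : ℤ, k ≠ 0 → (c₁ : ℝ) * (p k : ℝ) - (q k : ℝ) = 0 := by
      intro k hk
      have hw := hcon k₀ k hk₀ hk
      have : c₁ * p k - q k = 0 := by
        rw [hc₁]
        field_simp
        linarith [hw]
      calc (c₁ : ℝ) * (p k : ℝ) - (q k : ℝ) = ((c₁ * p k - q k : ℚ) : ℝ) := by push_cast; ring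
        _ = 0 := by rw [this]; simp
    have hsum : (c₁ : ℝ) * P u - Q u = (c₁ : ℝ) * (p 0 : ℝ) - (q 0 : ℝ) := by
      rw [hPu, hQu, Finset.mul_sum, ← Finset.sum_sub_distrib]
      have : ∀ k ∈ s, (c₁ : ℝ) * ((p k : ℝ) * u ^ k) - (q k : ℝ) * u ^ k
          = ((c₁ : ℝ) * (p k : ℝ) - (q k : ℝ)) * u ^ k := fun k _ => by ring
      rw [Finset.sum_congr rfl this]
      rw [Finset.sum_eq_single 0]
      · simp
      · intro k hk hk0
        rw [hterm k hk0, zero_mul]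
      · intro h0s
        have hp0 : p 0 = 0 := by
          by_contra hne
          exact h0s (Finset.mem_union_left _ (by simpa using hne))
        have hq0 : q 0 = 0 := by
          by_contra hne
          exact h0s (Finset.mem_union_right _ (by simpa using hne))
        simp [hp0, hq0]
    calc (c₁ : ℝ) * (P u - (p 0 : ℝ)) + (-1) * (Q u - (q 0 : ℝ))
        = ((c₁ : ℝ) * P u - Q u) - ((c₁ : ℝ) * (p 0 : ℝ) - (q 0 : ℝ)) := by ring
      _ = 0 := by rw [hsum]; ring

private lemma exists_extremal (p q : ℤ → ℚ)
    (hp : (Function.support p).Finite) (hq : (Function.support q).Finite)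
    (hpair : ∃ k l : ℤ, k ≠ 0 ∧ l ≠ 0 ∧ p k * q l - p l * q k ≠ 0) :
    ∃ k₁ l₀ : ℤ, k₁ ≠ 0 ∧ l₀ ≠ 0 ∧ k₁ < l₀ ∧ p k₁ * q l₀ - p l₀ * q k₁ ≠ 0 ∧
      (∀ k j : ℤ, k ≠ 0 → j ≠ 0 → k ≠ j → k + j = k₁ + l₀ →
        ¬(k = k₁ ∧ j = l₀) → ¬(k = l₀ ∧ j = k₁) → p k * q j - p j * q k = 0) := by
  classical
  obtain ⟨ka, la, hka, hla, hwa⟩ := hpair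
  set D : Finset ℤ := (hp.toFinset ∪ hq.toFinset).filter
    (fun k => k ≠ 0 ∧ (p k ≠ 0 ∨ q k ≠ 0)) with hD
  have hmemD : ∀ k : ℤ, k ∈ D ↔ (k ≠ 0 ∧ (p k ≠ 0 ∨ q k ≠ 0)) := by
    intro k
    simp only [hD, Finset.mem_filter, Finset.mem_union, Set.Finite.mem_toFinset,
      Function.mem_support]
    tauto
  have hcol : ∀ k l : ℤ, p k * q l - p l * q k ≠ 0 → (p k ≠ 0 ∨ q k ≠ 0) := by
    intro k l h
    by_contra hc
    push_neg at hc
    exact h (by rw [hc.1, hc.2]; ring)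
  have hcol' : ∀ k l : ℤ, p k * q l - p l * q k ≠ 0 → (p l ≠ 0 ∨ q l ≠ 0) := by
    intro k l h
    by_contra hc
    push_neg at hc
    exact h (by rw [hc.1, hc.2]; ring)
  have hkaD : ka ∈ D := (hmemD ka).mpr ⟨hka, hcol _ _ hwa⟩
  have hlaD : la ∈ D := (hmemD la).mpr ⟨hla, hcol' _ _ hwa⟩
  have hDne : D.Nonempty := ⟨ka, hkaD⟩
  set k₁ := D.min' hDne with hk₁
  have hk₁D : k₁ ∈ D := D.min'_mem hDne
  set L : Finset ℤ := D.filter (fun l => p k₁ * q l - p l * q k₁ ≠ 0) with hL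
  have hLne : L.Nonempty := by
    by_contra hemp
    rw [Finset.not_nonempty_iff_eq_empty, Finset.filter_eq_empty_iff] at hemp
    exact hwa (w_trans p q k₁ ka la ((hmemD k₁).mp hk₁D).2
      (not_not.mp (hemp hkaD)) (not_not.mp (hemp hlaD)))
  set l₀ := L.min' hLne with hl₀
  have hl₀L : l₀ ∈ L := L.min'_mem hLne
  have hl₀D : l₀ ∈ D := (Finset.mem_filter.mp hl₀L).1
  have hwmain : p k₁ * q l₀ - p l₀ * q k₁ ≠ 0 := (Finset.mem_filter.mp hl₀L).2
  have hk₁l₀ : k₁ ≠ l₀ := by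
    intro h
    exact hwmain (by rw [h]; ring)
  have hk₁lt : k₁ < l₀ := lt_of_le_of_ne (D.min'_le _ hl₀D) hk₁l₀
  have main : ∀ k j : ℤ, k < j → k ∈ D → j ∈ D → k + j = k₁ + l₀ →
      ¬(k = k₁ ∧ j = l₀) → p k * q j - p j * q k = 0 := by
    intro k j hlt hkD hjD hsum hne
    have hk₁le : k₁ ≤ k := D.min'_le _ hkD
    have hkgt : k₁ < k := by
      rcases eq_or_lt_of_le hk₁le with heq | h
      · exact absurd ⟨heq.symm, by omega⟩ hne
      · exact h
    have hjlt : j < l₀ := by omega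
    have hkL : p k₁ * q k - p k * q k₁ = 0 := by
      by_contra hne'
      have hmem : k ∈ L := Finset.mem_filter.mpr ⟨hkD, hne'⟩
      have := L.min'_le _ hmem
      omega
    have hjL : p k₁ * q j - p j * q k₁ = 0 := by
      by_contra hne'
      have hmem : j ∈ L := Finset.mem_filter.mpr ⟨hjD, hne'⟩
      have := L.min'_le _ hmem
      omega
    exact w_trans p q k₁ k j ((hmemD k₁).mp hk₁D).2 hkL hjL
  refine ⟨k₁, l₀, ((hmemD k₁).mp hk₁D).1, ((hmemD l₀).mp hl₀D).1, hk₁lt, hwmain, ?_⟩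
  intro k j hk hj hkj hsum hne1 hne2
  by_cases hkD : k ∈ D
  · by_cases hjD : j ∈ D
    · rcases lt_or_gt_of_ne hkj with h | h
      · exact main k j h hkD hjD hsum hne1
      · have h0 := main j k h hjD hkD (by omega) (by
          rintro ⟨h1, h2⟩
          exact hne2 ⟨h2, h1⟩)
        linear_combination -h0
    · have h' : ¬(j ≠ 0 ∧ (p j ≠ 0 ∨ q j ≠ 0)) := fun hc => hjD ((hmemD j).mpr hc)
      have hcols : p j = 0 ∧ q j = 0 := by tauto
      rw [hcols.1, hcols.2]; ring
  · have h' : ¬(k ≠ 0 ∧ (p k ≠ 0 ∨ q k ≠ 0)) := fun hc => hkD ((hmemD k).mpr hc)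
    have hcols : p k = 0 ∧ q k = 0 := by tauto
    rw [hcols.1, hcols.2]; ring

private lemma exists_extremal₀ (p q : ℤ → ℚ)
    (hp : (Function.support p).Finite) (hq : (Function.support q).Finite)
    (hpair : ∃ k l : ℤ, k ≠ 0 ∧ l ≠ 0 ∧ p k * q l - p l * q k ≠ 0) :
    ∃ k₁ l₀ : ℤ, k₁ < l₀ ∧ p k₁ * q l₀ - p l₀ * q k₁ ≠ 0 ∧
      (∀ k j : ℤ, k ≠ j → k + j = k₁ + l₀ →
        ¬(k = k₁ ∧ j = l₀) → ¬(k = l₀ ∧ j = k₁) → p k * q j - p j * q k = 0) := by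
  classical
  obtain ⟨ka, la, hka, hla, hwa⟩ := hpair
  set D : Finset ℤ := (hp.toFinset ∪ hq.toFinset).filter
    (fun k => p k ≠ 0 ∨ q k ≠ 0) with hD
  have hmemD : ∀ k : ℤ, k ∈ D ↔ (p k ≠ 0 ∨ q k ≠ 0) := by
    intro k
    simp only [hD, Finset.mem_filter, Finset.mem_union, Set.Finite.mem_toFinset,
      Function.mem_support]
    tauto
  have hcol : ∀ k l : ℤ, p k * q l - p l * q k ≠ 0 → (p k ≠ 0 ∨ q k ≠ 0) := by
    intro k l h
    by_contra hc
    push_neg at hc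
    exact h (by rw [hc.1, hc.2]; ring)
  have hcol' : ∀ k l : ℤ, p k * q l - p l * q k ≠ 0 → (p l ≠ 0 ∨ q l ≠ 0) := by
    intro k l h
    by_contra hc
    push_neg at hc
    exact h (by rw [hc.1, hc.2]; ring)
  have hkaD : ka ∈ D := (hmemD ka).mpr (hcol _ _ hwa)
  have hlaD : la ∈ D := (hmemD la).mpr (hcol' _ _ hwa)
  have hDne : D.Nonempty := ⟨ka, hkaD⟩
  set k₁ := D.min' hDne with hk₁
  have hk₁D : k₁ ∈ D := D.min'_mem hDne
  set L : Finset ℤ := D.filter (fun l => p k₁ * q l - p l * q k₁ ≠ 0) with hL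
  have hLne : L.Nonempty := by
    by_contra hemp
    rw [Finset.not_nonempty_iff_eq_empty, Finset.filter_eq_empty_iff] at hemp
    exact hwa (w_trans p q k₁ ka la ((hmemD k₁).mp hk₁D)
      (not_not.mp (hemp hkaD)) (not_not.mp (hemp hlaD)))
  set l₀ := L.min' hLne with hl₀
  have hl₀L : l₀ ∈ L := L.min'_mem hLne
  have hl₀D : l₀ ∈ D := (Finset.mem_filter.mp hl₀L).1
  have hwmain : p k₁ * q l₀ - p l₀ * q k₁ ≠ 0 := (Finset.mem_filter.mp hl₀L).2
  have hk₁l₀ : k₁ ≠ l₀ := by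
    intro h
    exact hwmain (by rw [h]; ring)
  have hk₁lt : k₁ < l₀ := lt_of_le_of_ne (D.min'_le _ hl₀D) hk₁l₀
  have main : ∀ k j : ℤ, k < j → k ∈ D → j ∈ D → k + j = k₁ + l₀ →
      ¬(k = k₁ ∧ j = l₀) → p k * q j - p j * q k = 0 := by
    intro k j hlt hkD hjD hsum hne
    have hk₁le : k₁ ≤ k := D.min'_le _ hkD
    have hkgt : k₁ < k := by
      rcases eq_or_lt_of_le hk₁le with heq | h
      · exact absurd ⟨heq.symm, by omega⟩ hne
      · exact h
    have hjlt : j < l₀ := by omega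
    have hkL : p k₁ * q k - p k * q k₁ = 0 := by
      by_contra hne'
      have hmem : k ∈ L := Finset.mem_filter.mpr ⟨hkD, hne'⟩
      have := L.min'_le _ hmem
      omega
    have hjL : p k₁ * q j - p j * q k₁ = 0 := by
      by_contra hne'
      have hmem : j ∈ L := Finset.mem_filter.mpr ⟨hjD, hne'⟩
      have := L.min'_le _ hmem
      omega
    exact w_trans p q k₁ k j ((hmemD k₁).mp hk₁D) hkL hjL
  refine ⟨k₁, l₀, hk₁lt, hwmain, ?_⟩
  intro k j hkj hsum hne1 hne2
  by_cases hkD : k ∈ D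
  · by_cases hjD : j ∈ D
    · rcases lt_or_gt_of_ne hkj with h | h
      · exact main k j h hkD hjD hsum hne1
      · have h0 := main j k h hjD hkD (by omega) (by
          rintro ⟨h1, h2⟩
          exact hne2 ⟨h2, h1⟩)
        linear_combination -h0
    · have h' : ¬(p j ≠ 0 ∨ q j ≠ 0) := fun hc => hjD ((hmemD j).mpr hc)
      have hcols : p j = 0 ∧ q j = 0 := by tauto
      rw [hcols.1, hcols.2]; ring
  · have h' : ¬(p k ≠ 0 ∨ q k ≠ 0) := fun hc => hkD ((hmemD k).mpr hc)
    have hcols : p k = 0 ∧ q k = 0 := by tauto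
    rw [hcols.1, hcols.2]; ring

private lemma relation_R0 (d : ℝ → ℝ) (p q : ℤ → ℚ) (s : Finset ℤ)
    (c : ℤ) (hc0 : c ≠ 0)
    (hcs : c ∈ s) (h0s : (0 : ℤ) ∈ s)
    (hext : ∀ k j : ℤ, k ≠ j → k + j = c →
        ¬(k = 0 ∧ j = c) → ¬(k = c ∧ j = 0) → p k * q j - p j * q k = 0)
    (v : ℝ) (hv : v ≠ 0)
    (hstar : ∑ kj ∈ (s ×ˢ s).filter (fun kj => kj.1 + kj.2 - 1 = c - 1),
        ((p kj.1 : ℝ) * (q kj.2 : ℝ)) *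
          ((kj.2 : ℝ) * v ^ (kj.2 - 1) * d (v ^ kj.1)
            - (kj.1 : ℝ) * v ^ (kj.1 - 1) * d (v ^ kj.2)) = 0) :
    (c : ℝ) * ((p 0 * q c - p c * q 0 : ℚ) : ℝ) * v ^ (c - 1) * d 1 = 0 := by
  classical
  set f : ℤ × ℤ → ℝ := fun kj =>
    ((p kj.1 : ℝ) * (q kj.2 : ℝ)) *
      ((kj.2 : ℝ) * v ^ (kj.2 - 1) * d (v ^ kj.1)
        - (kj.1 : ℝ) * v ^ (kj.1 - 1) * d (v ^ kj.2)) with hf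
  set F : Finset (ℤ × ℤ) := (s ×ˢ s).filter (fun kj => kj.1 + kj.2 - 1 = c - 1) with hF
  set G : Finset (ℤ × ℤ) := {(0, c), (c, 0)} with hG
  have hsplit : ∑ kj ∈ F, f kj
      = ∑ kj ∈ F.filter (· ∈ G), f kj + ∑ kj ∈ F.filter (· ∉ G), f kj :=
    (Finset.sum_filter_add_sum_filter_not F _ f).symm
  have hswap : ∑ kj ∈ F.filter (· ∉ G), f kj = 0 := by
    apply Finset.sum_involution (g := fun kj _ => (kj.2, kj.1))
    · intro kj ha
      have haF : kj ∈ F := (Finset.mem_filter.mp ha).1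
      have haG : kj ∉ G := (Finset.mem_filter.mp ha).2
      obtain ⟨k, j⟩ := kj
      have hsum : k + j = c := by
        have := (Finset.mem_filter.mp haF).2
        omega
      have hcomb : f (k, j) + f (j, k)
          = ((p k : ℝ) * (q j : ℝ) - (p j : ℝ) * (q k : ℝ)) *
            ((j : ℝ) * v ^ (j - 1) * d (v ^ k) - (k : ℝ) * v ^ (k - 1) * d (v ^ j)) := by
        rw [hf]; ring
      rw [hcomb]
      rcases eq_or_ne k j with rfl | hkj
      · have : (p k : ℝ) * (q k : ℝ) - (p k : ℝ) * (q k : ℝ) = 0 := by ring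
        rw [this, zero_mul]
      · have hne1 : ¬(k = 0 ∧ j = c) := by
          rintro ⟨rfl, rfl⟩
          exact haG (by simp [hG])
        have hne2 : ¬(k = c ∧ j = 0) := by
          rintro ⟨rfl, rfl⟩
          exact haG (by simp [hG])
        have hw := hext k j hkj hsum hne1 hne2
        have hwR : (p k : ℝ) * (q j : ℝ) - (p j : ℝ) * (q k : ℝ) = 0 := by
          exact_mod_cast congrArg (fun x : ℚ => (x : ℝ)) hw
        rw [hwR, zero_mul]
    · intro kj ha hfa
      obtain ⟨k, j⟩ := kj
      intro hswapEq
      have hjk : j = k := by simpa using congrArg Prod.fst hswapEq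
      apply hfa
      subst hjk
      rw [hf]
      simp only
      ring
    · intro kj ha
      have haF : kj ∈ F := (Finset.mem_filter.mp ha).1
      have haG : kj ∉ G := (Finset.mem_filter.mp ha).2
      rw [Finset.mem_filter]
      constructor
      · rw [hF, Finset.mem_filter] at haF ⊢
        refine ⟨?_, ?_⟩
        · rw [Finset.mem_product] at haF ⊢
          exact ⟨haF.1.2, haF.1.1⟩
        · have := haF.2
          simp only at this ⊢
          omega
      · intro hmem
        apply haG
        obtain ⟨k, j⟩ := kj
        simp only [hG, Finset.mem_insert, Finset.mem_singleton, Prod.mk.injEq] at hmem ⊢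
        tauto
    · intro kj ha
      rfl
  have hGF : G ⊆ F := by
    intro kj hkj
    rw [hG] at hkj
    rw [hF, Finset.mem_filter, Finset.mem_product]
    simp only [Finset.mem_insert, Finset.mem_singleton] at hkj
    rcases hkj with rfl | rfl
    · exact ⟨⟨h0s, hcs⟩, by simp⟩
    · exact ⟨⟨hcs, h0s⟩, by simp⟩
  have hfilterG : F.filter (· ∈ G) = G := by
    rw [Finset.filter_mem_eq_inter]
    exact Finset.inter_eq_right.mpr hGF
  have hd1 : d (v ^ (0 : ℤ)) = d 1 := by rw [zpow_zero]
  have hGsum : ∑ kj ∈ G, f kj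
      = (c : ℝ) * ((p 0 * q c - p c * q 0 : ℚ) : ℝ) * v ^ (c - 1) * d 1 := by
    have h1 : ((0 : ℤ), c) ∉ ({(c, (0 : ℤ))} : Finset (ℤ × ℤ)) := by
      intro hmem
      simp only [Finset.mem_singleton, Prod.mk.injEq] at hmem
      omega
    rw [hG, Finset.sum_insert h1, Finset.sum_singleton]
    rw [hf]
    simp only
    rw [hd1]
    push_cast
    ring
  have hstar' : ∑ kj ∈ F, f kj = 0 := hstar
  rw [hsplit, hswap, add_zero, hfilterG, hGsum] at hstar'
  exact hstar'

private lemma relation_R (d : ℝ → ℝ) (p q : ℤ → ℚ) (s : Finset ℤ)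
    (k₁ l₀ : ℤ) (hk₁0 : k₁ ≠ 0) (hl₀0 : l₀ ≠ 0) (hlt : k₁ < l₀)
    (hk₁s : k₁ ∈ s) (hl₀s : l₀ ∈ s) (h0s : (0 : ℤ) ∈ s) (hms : k₁ + l₀ ∈ s)
    (hext : ∀ k j : ℤ, k ≠ 0 → j ≠ 0 → k ≠ j → k + j = k₁ + l₀ →
        ¬(k = k₁ ∧ j = l₀) → ¬(k = l₀ ∧ j = k₁) → p k * q j - p j * q k = 0)
    (v : ℝ) (hv : v ≠ 0)
    (hstar : ∑ kj ∈ (s ×ˢ s).filter (fun kj => kj.1 + kj.2 - 1 = k₁ + l₀ - 1),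
        ((p kj.1 : ℝ) * (q kj.2 : ℝ)) *
          ((kj.2 : ℝ) * v ^ (kj.2 - 1) * d (v ^ kj.1)
            - (kj.1 : ℝ) * v ^ (kj.1 - 1) * d (v ^ kj.2)) = 0) :
    ((p k₁ * q l₀ - p l₀ * q k₁ : ℚ) : ℝ) *
        ((l₀ : ℝ) * v ^ (l₀ - 1) * d (v ^ k₁) - (k₁ : ℝ) * v ^ (k₁ - 1) * d (v ^ l₀))
      + ((k₁ + l₀ : ℤ) : ℝ) * ((p 0 * q (k₁ + l₀) - p (k₁ + l₀) * q 0 : ℚ) : ℝ) *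
          v ^ (k₁ + l₀ - 1) * d 1 = 0 := by
  classical
  set m : ℤ := k₁ + l₀ with hm
  set f : ℤ × ℤ → ℝ := fun kj =>
    ((p kj.1 : ℝ) * (q kj.2 : ℝ)) *
      ((kj.2 : ℝ) * v ^ (kj.2 - 1) * d (v ^ kj.1)
        - (kj.1 : ℝ) * v ^ (kj.1 - 1) * d (v ^ kj.2)) with hf
  set F : Finset (ℤ × ℤ) := (s ×ˢ s).filter (fun kj => kj.1 + kj.2 - 1 = m - 1) with hF
  set G : Finset (ℤ × ℤ) := {(k₁, l₀), (l₀, k₁), (0, m), (m, 0)} with hG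
  have hsplit : ∑ kj ∈ F, f kj
      = ∑ kj ∈ F.filter (· ∈ G), f kj + ∑ kj ∈ F.filter (· ∉ G), f kj :=
    (Finset.sum_filter_add_sum_filter_not F _ f).symm
  -- the involution part
  have hswap : ∑ kj ∈ F.filter (· ∉ G), f kj = 0 := by
    apply Finset.sum_involution (g := fun kj _ => (kj.2, kj.1))
    · -- f a + f (swap a) = 0
      intro kj ha
      have haF : kj ∈ F := (Finset.mem_filter.mp ha).1
      have haG : kj ∉ G := (Finset.mem_filter.mp ha).2
      obtain ⟨k, j⟩ := kj
      have hsum : k + j = m := by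
        have := (Finset.mem_filter.mp haF).2
        omega
      have hcomb : f (k, j) + f (j, k)
          = ((p k : ℝ) * (q j : ℝ) - (p j : ℝ) * (q k : ℝ)) *
            ((j : ℝ) * v ^ (j - 1) * d (v ^ k) - (k : ℝ) * v ^ (k - 1) * d (v ^ j)) := by
        rw [hf]; ring
      rw [hcomb]
      rcases eq_or_ne k j with rfl | hkj
      · have : (p k : ℝ) * (q k : ℝ) - (p k : ℝ) * (q k : ℝ) = 0 := by ring
        rw [this, zero_mul]
      · have hk0 : k ≠ 0 := by
          rintro rfl
          apply haG
          have : j = m := by omega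
          simp [hG, this]
        have hj0 : j ≠ 0 := by
          rintro rfl
          apply haG
          have : k = m := by omega
          simp [hG, this]
        have hne1 : ¬(k = k₁ ∧ j = l₀) := by
          rintro ⟨rfl, rfl⟩
          exact haG (by simp [hG])
        have hne2 : ¬(k = l₀ ∧ j = k₁) := by
          rintro ⟨rfl, rfl⟩
          exact haG (by simp [hG])
        have hw := hext k j hk0 hj0 hkj hsum hne1 hne2
        have hwR : (p k : ℝ) * (q j : ℝ) - (p j : ℝ) * (q k : ℝ) = 0 := by
          exact_mod_cast congrArg (fun x : ℚ => (x : ℝ)) hw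
        rw [hwR, zero_mul]
    · -- nontrivial fixed points
      intro kj ha hfa
      obtain ⟨k, j⟩ := kj
      intro hswapEq
      have hjk : j = k := by simpa using congrArg Prod.fst hswapEq
      apply hfa
      subst hjk
      rw [hf]
      simp only
      ring
    · -- membership
      intro kj ha
      have haF : kj ∈ F := (Finset.mem_filter.mp ha).1
      have haG : kj ∉ G := (Finset.mem_filter.mp ha).2
      rw [Finset.mem_filter]
      constructor
      · rw [hF, Finset.mem_filter] at haF ⊢
        refine ⟨?_, ?_⟩
        · rw [Finset.mem_product] at haF ⊢
          exact ⟨haF.1.2, haF.1.1⟩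
        · have := haF.2
          simp only at this ⊢
          omega
      · intro hmem
        apply haG
        obtain ⟨k, j⟩ := kj
        simp only [hG, Finset.mem_insert, Finset.mem_singleton, Prod.mk.injEq] at hmem ⊢
        tauto
    · -- involutive
      intro kj ha
      rfl
  -- the special part
  have hGF : G ⊆ F := by
    intro kj hkj
    rw [hG] at hkj
    rw [hF, Finset.mem_filter, Finset.mem_product]
    simp only [Finset.mem_insert, Finset.mem_singleton] at hkj
    rcases hkj with rfl | rfl | rfl | rfl
    · exact ⟨⟨hk₁s, hl₀s⟩, by simp [hm]⟩
    · exact ⟨⟨hl₀s, hk₁s⟩, by simp; omega⟩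
    · exact ⟨⟨h0s, hms⟩, by simp⟩
    · exact ⟨⟨hms, h0s⟩, by simp⟩
  have hfilterG : F.filter (· ∈ G) = G := by
    rw [Finset.filter_mem_eq_inter]
    exact Finset.inter_eq_right.mpr hGF
  have hGsum : ∑ kj ∈ G, f kj
      = ((p k₁ * q l₀ - p l₀ * q k₁ : ℚ) : ℝ) *
          ((l₀ : ℝ) * v ^ (l₀ - 1) * d (v ^ k₁) - (k₁ : ℝ) * v ^ (k₁ - 1) * d (v ^ l₀))
        + ((m : ℤ) : ℝ) * ((p 0 * q m - p m * q 0 : ℚ) : ℝ) * v ^ (m - 1) * d 1 := by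
    have hd1 : d (v ^ (0 : ℤ)) = d 1 := by rw [zpow_zero]
    by_cases hm0 : m = 0
    · have hG' : G = {(k₁, l₀), (l₀, k₁), ((0 : ℤ), (0 : ℤ))} := by
        rw [hG, hm0]
        ext x
        simp only [Finset.mem_insert, Finset.mem_singleton]
        tauto
      rw [hG']
      have h1 : ((k₁, l₀) : ℤ × ℤ) ∉ ({(l₀, k₁), ((0:ℤ), (0:ℤ))} : Finset (ℤ × ℤ)) := by
        intro hmem
        simp only [Finset.mem_insert, Finset.mem_singleton, Prod.mk.injEq] at hmem
        omega
      have h2 : ((l₀, k₁) : ℤ × ℤ) ∉ ({((0:ℤ), (0:ℤ))} : Finset (ℤ × ℤ)) := by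
        intro hmem
        simp only [Finset.mem_singleton, Prod.mk.injEq] at hmem
        omega
      rw [Finset.sum_insert h1, Finset.sum_insert h2, Finset.sum_singleton]
      rw [hf]
      simp only
      rw [hm0]
      push_cast
      ring
    · have h1 : ((k₁, l₀) : ℤ × ℤ) ∉ ({(l₀, k₁), (0, m), (m, 0)} : Finset (ℤ × ℤ)) := by
        intro hmem
        simp only [Finset.mem_insert, Finset.mem_singleton, Prod.mk.injEq] at hmem
        omega
      have h2 : ((l₀, k₁) : ℤ × ℤ) ∉ ({(0, m), (m, 0)} : Finset (ℤ × ℤ)) := by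
        intro hmem
        simp only [Finset.mem_insert, Finset.mem_singleton, Prod.mk.injEq] at hmem
        omega
      have h3 : ((0, m) : ℤ × ℤ) ∉ ({(m, 0)} : Finset (ℤ × ℤ)) := by
        intro hmem
        simp only [Finset.mem_singleton, Prod.mk.injEq] at hmem
        omega
      rw [hG, Finset.sum_insert h1, Finset.sum_insert h2, Finset.sum_insert h3,
        Finset.sum_singleton]
      rw [hf]
      simp only
      rw [hd1]
      push_cast
      ring
  have hstar' : ∑ kj ∈ F, f kj = 0 := hstar
  rw [hsplit, hswap, add_zero, hfilterG, hGsum] at hstar'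
  exact hstar'

private lemma regroup (s₁ s₂ : Finset ℕ) (F : ℕ × ℕ → ℝ) (e : ℕ × ℕ → ℕ) (B : Finset ℕ)
    (hmap : ∀ ai ∈ s₁ ×ˢ s₂, e ai ∈ B) (t : ℝ) :
    ∑ a ∈ s₁, ∑ i ∈ s₂, F (a, i) * t ^ (e (a, i))
      = ∑ r ∈ B, (∑ ai ∈ (s₁ ×ˢ s₂).filter (fun ai => e ai = r), F ai) * t ^ r := by
  have h1 : ∀ r ∈ B, (∑ ai ∈ (s₁ ×ˢ s₂).filter (fun ai => e ai = r), F ai) * t ^ r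
      = ∑ ai ∈ (s₁ ×ˢ s₂).filter (fun ai => e ai = r), F ai * t ^ (e ai) := by
    intro r _
    rw [Finset.sum_mul]
    refine Finset.sum_congr rfl fun ai hai => ?_
    rw [(Finset.mem_filter.mp hai).2]
  rw [Finset.sum_congr rfl h1, Finset.sum_fiberwise_of_maps_to hmap, Finset.sum_product]

private lemma dbinom (d : ℝ → ℝ) (hd : ∀ x y : ℝ, d (x + y) = d x + d y)
    (x : ℝ) (r : ℚ) (n : ℕ) :
    d ((x + (r : ℝ)) ^ n)
      = ∑ i ∈ range (n + 1), ((n.choose i : ℝ) * d (x ^ i)) * (r : ℝ) ^ (n - i) := by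
  rw [add_pow]
  have h1 : d (∑ m ∈ range (n + 1), x ^ m * (r : ℝ) ^ (n - m) * ((n.choose m : ℕ) : ℝ))
      = ∑ m ∈ range (n + 1), d (x ^ m * (r : ℝ) ^ (n - m) * ((n.choose m : ℕ) : ℝ)) :=
    map_sum (AddMonoidHom.mk' d hd) _ _
  rw [h1]
  refine Finset.sum_congr rfl fun i hi => ?_
  have hcast : x ^ i * (r : ℝ) ^ (n - i) * ((n.choose i : ℕ) : ℝ)
      = (((r ^ (n - i) * (n.choose i : ℚ)) : ℚ) : ℝ) * x ^ i := by
    push_cast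
    ring
  show d (x ^ i * (r : ℝ) ^ (n - i) * ((n.choose i : ℕ) : ℝ)) = _
  rw [hcast, d_rat_smul d hd]
  push_cast
  ring

private lemma expand_prod (d : ℝ → ℝ) (hd : ∀ x y : ℝ, d (x + y) = d x + d y)
    (x : ℝ) (r : ℚ) (n m : ℕ) :
    (x + (r : ℝ)) ^ n * d ((x + (r : ℝ)) ^ m)
      = ∑ k ∈ range (n + 1), ∑ i ∈ range (m + 1),
          (((n.choose k : ℝ) * x ^ k) * ((m.choose i : ℝ) * d (x ^ i)))
            * (r : ℝ) ^ ((n - k) + (m - i)) := by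
  rw [add_pow, dbinom d hd, Finset.sum_mul_sum]
  refine Finset.sum_congr rfl fun k hk => Finset.sum_congr rfl fun i hi => ?_
  rw [pow_add]
  ring

private lemma cascade (d : ℝ → ℝ) (hd : ∀ x y : ℝ, d (x + y) = d x + d y)
    (K L : ℕ) (hK : 1 ≤ K) (hKL : K < L)
    (hrel : ∀ v : ℝ, v ≠ 0 → (L : ℝ) * v ^ (L - 1) * d (v ^ K) = (K : ℝ) * v ^ (K - 1) * d (v ^ L)) :
    ∀ x : ℝ, d (x * x) = x * d x + x * d x := by
  intro x
  have hL2 : 2 ≤ L := by omega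
  obtain ⟨S, hSinf, hSrat, hSsub⟩ := exists_infinite_rat (|x| + 1) (|x| + 2) (by linarith)
  have hrel3 : ∀ v : ℝ, v ≠ 0 →
      (L : ℝ) * (v ^ (L + 2) * d (v ^ K)) - (K : ℝ) * (v ^ (K + 2) * d (v ^ L)) = 0 := by
    intro v hv
    have h := hrel v hv
    have e1 : v ^ (L + 2) = v ^ (L - 1) * v ^ 3 := by
      rw [← pow_add]; congr 1; omega
    have e2 : v ^ (K + 2) = v ^ (K - 1) * v ^ 3 := by
      rw [← pow_add]; congr 1; omega
    rw [e1, e2]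
    calc (L : ℝ) * (v ^ (L - 1) * v ^ 3 * d (v ^ K)) - (K : ℝ) * (v ^ (K - 1) * v ^ 3 * d (v ^ L))
        = ((L : ℝ) * v ^ (L - 1) * d (v ^ K)) * v ^ 3
          - ((K : ℝ) * v ^ (K - 1) * d (v ^ L)) * v ^ 3 := by ring
      _ = 0 := by rw [h]; ring
  set B : Finset ℕ := range (K + L + 3) with hB
  set c1 : ℕ → ℝ := fun r =>
    ∑ ai ∈ ((range (L + 3)) ×ˢ (range (K + 1))).filter
        (fun ai => (L + 2 - ai.1) + (K - ai.2) = r),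
      (((L + 2).choose ai.1 : ℝ) * x ^ ai.1) * ((K.choose ai.2 : ℝ) * d (x ^ ai.2)) with hc1
  set c2 : ℕ → ℝ := fun r =>
    ∑ ai ∈ ((range (K + 3)) ×ˢ (range (L + 1))).filter
        (fun ai => (K + 2 - ai.1) + (L - ai.2) = r),
      (((K + 2).choose ai.1 : ℝ) * x ^ ai.1) * ((L.choose ai.2 : ℝ) * d (x ^ ai.2)) with hc2
  set c : ℕ → ℝ := fun r => (L : ℝ) * c1 r - (K : ℝ) * c2 r with hc
  have hmap1 : ∀ ai ∈ (range (L + 3)) ×ˢ (range (K + 1)),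
      (fun ai : ℕ × ℕ => (L + 2 - ai.1) + (K - ai.2)) ai ∈ B := by
    rintro ⟨a, i⟩ hai
    rw [Finset.mem_product, Finset.mem_range, Finset.mem_range] at hai
    rw [hB, Finset.mem_range]
    show L + 2 - a + (K - i) < K + L + 3
    omega
  have hmap2 : ∀ ai ∈ (range (K + 3)) ×ˢ (range (L + 1)),
      (fun ai : ℕ × ℕ => (K + 2 - ai.1) + (L - ai.2)) ai ∈ B := by
    rintro ⟨a, i⟩ hai
    rw [Finset.mem_product, Finset.mem_range, Finset.mem_range] at hai
    rw [hB, Finset.mem_range]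
    show K + 2 - a + (L - i) < K + L + 3
    omega
  have hcoeff : ∀ r ∈ B, c r = 0 := by
    apply nat_coeff_zero B c S hSinf
    intro tt htt
    obtain ⟨r, rfl⟩ := hSrat tt htt
    have htIoo := hSsub htt
    have hxt : x + (r : ℝ) ≠ 0 := by
      have h1 : (|x| + 1) < (r : ℝ) := htIoo.1
      have h2 : -x ≤ |x| := neg_le_abs x
      intro hcontra
      have : (r : ℝ) = -x := by linarith
      rw [this] at h1
      linarith
    have hmain := hrel3 (x + (r : ℝ)) hxt
    rw [expand_prod d hd x r (L + 2) K, expand_prod d hd x r (K + 2) L] at hmain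
    have e1 : ∑ n ∈ B, c1 n * (r : ℝ) ^ n
        = ∑ k ∈ range (L + 2 + 1), ∑ i ∈ range (K + 1),
            ((((L + 2).choose k : ℝ) * x ^ k) * ((K.choose i : ℝ) * d (x ^ i)))
              * (r : ℝ) ^ ((L + 2 - k) + (K - i)) :=
      (regroup (range (L + 3)) (range (K + 1))
        (fun ai => (((L + 2).choose ai.1 : ℝ) * x ^ ai.1) * ((K.choose ai.2 : ℝ) * d (x ^ ai.2)))
        (fun ai => (L + 2 - ai.1) + (K - ai.2)) B hmap1 (r : ℝ)).symm
    have e2 : ∑ n ∈ B, c2 n * (r : ℝ) ^ n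
        = ∑ k ∈ range (K + 2 + 1), ∑ i ∈ range (L + 1),
            ((((K + 2).choose k : ℝ) * x ^ k) * ((L.choose i : ℝ) * d (x ^ i)))
              * (r : ℝ) ^ ((K + 2 - k) + (L - i)) :=
      (regroup (range (K + 3)) (range (L + 1))
        (fun ai => (((K + 2).choose ai.1 : ℝ) * x ^ ai.1) * ((L.choose ai.2 : ℝ) * d (x ^ ai.2)))
        (fun ai => (K + 2 - ai.1) + (L - ai.2)) B hmap2 (r : ℝ)).symm
    calc ∑ n ∈ B, c n * (r : ℝ) ^ n
        = (L : ℝ) * (∑ n ∈ B, c1 n * (r : ℝ) ^ n)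
          - (K : ℝ) * (∑ n ∈ B, c2 n * (r : ℝ) ^ n) := by
          rw [Finset.mul_sum, Finset.mul_sum, ← Finset.sum_sub_distrib]
          exact Finset.sum_congr rfl fun n _ => by rw [hc]; ring
      _ = 0 := by rw [e1, e2]; exact hmain
  -- derive d 1 = 0 from the top coefficient
  have htop : K + L + 2 ∈ B := by rw [hB, Finset.mem_range]; omega
  have hctop := hcoeff (K + L + 2) htop
  have hft1 : ((range (L + 3)) ×ˢ (range (K + 1))).filter
      (fun ai => (L + 2 - ai.1) + (K - ai.2) = K + L + 2)
      = ({((0 : ℕ), (0 : ℕ))} : Finset (ℕ × ℕ)) := by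
    ext ⟨k, i⟩
    simp only [Finset.mem_filter, Finset.mem_product, Finset.mem_range,
      Finset.mem_singleton, Prod.mk.injEq]
    omega
  have hft2 : ((range (K + 3)) ×ˢ (range (L + 1))).filter
      (fun ai => (K + 2 - ai.1) + (L - ai.2) = K + L + 2)
      = ({((0 : ℕ), (0 : ℕ))} : Finset (ℕ × ℕ)) := by
    ext ⟨k, i⟩
    simp only [Finset.mem_filter, Finset.mem_product, Finset.mem_range,
      Finset.mem_singleton, Prod.mk.injEq]
    omega
  have hc1t : c1 (K + L + 2) = d 1 := by
    rw [hc1]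
    simp only
    rw [hft1, Finset.sum_singleton]
    simp
  have hc2t : c2 (K + L + 2) = d 1 := by
    rw [hc2]
    simp only
    rw [hft2, Finset.sum_singleton]
    simp
  have hctop' : (L : ℝ) * c1 (K + L + 2) - (K : ℝ) * c2 (K + L + 2) = 0 := hctop
  rw [hc1t, hc2t] at hctop'
  have hd1 : d 1 = 0 := by
    have hfac : ((L : ℝ) - (K : ℝ)) * d 1 = 0 := by linear_combination hctop'
    have hne : (L : ℝ) - (K : ℝ) ≠ 0 := by
      have : (K : ℝ) < (L : ℝ) := by exact_mod_cast hKL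
      linarith
    exact (mul_eq_zero.mp hfac).resolve_left hne
  have hKL3 : K + L ∈ B := by rw [hB, Finset.mem_range]; omega
  have hckl := hcoeff (K + L) hKL3
  -- identify the two filter sets
  have hfilter2 : ((range (K + 3)) ×ˢ (range (L + 1))).filter
      (fun ai => (K + 2 - ai.1) + (L - ai.2) = K + L)
      = ({((0 : ℕ), (2 : ℕ)), (1, 1), (2, 0)} : Finset (ℕ × ℕ)) := by
    ext ⟨k, i⟩
    simp only [Finset.mem_filter, Finset.mem_product, Finset.mem_range, Finset.mem_insert,
      Finset.mem_singleton, Prod.mk.injEq]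
    omega
  have hc2v : c2 (K + L) = ((L.choose 2 : ℝ)) * d (x ^ 2)
      + ((K : ℝ) + 2) * (L : ℝ) * x * d x + (((K + 2).choose 2 : ℝ)) * x ^ 2 * d 1 := by
    rw [hc2]
    simp only
    rw [hfilter2]
    rw [Finset.sum_insert (by decide), Finset.sum_insert (by decide), Finset.sum_singleton]
    simp only [Nat.choose_zero_right, Nat.choose_one_right, Nat.choose_self, pow_zero, pow_one]
    push_cast
    ring
  by_cases hK2 : 2 ≤ K
  · have hfilter1 : ((range (L + 3)) ×ˢ (range (K + 1))).filter
        (fun ai => (L + 2 - ai.1) + (K - ai.2) = K + L)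
        = ({((0 : ℕ), (2 : ℕ)), (1, 1), (2, 0)} : Finset (ℕ × ℕ)) := by
      ext ⟨k, i⟩
      simp only [Finset.mem_filter, Finset.mem_product, Finset.mem_range, Finset.mem_insert,
        Finset.mem_singleton, Prod.mk.injEq]
      omega
    have hc1v : c1 (K + L) = ((K.choose 2 : ℝ)) * d (x ^ 2)
        + ((L : ℝ) + 2) * (K : ℝ) * x * d x + (((L + 2).choose 2 : ℝ)) * x ^ 2 * d 1 := by
      rw [hc1]
      simp only
      rw [hfilter1]
      rw [Finset.sum_insert (by decide), Finset.sum_insert (by decide), Finset.sum_singleton]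
      simp only [Nat.choose_zero_right, Nat.choose_one_right, Nat.choose_self, pow_zero, pow_one]
      push_cast
      ring
    have hckl' : (L : ℝ) * c1 (K + L) - (K : ℝ) * c2 (K + L) = 0 := hckl
    rw [hc1v, hc2v, hd1] at hckl'
    simp only [mul_zero, add_zero] at hckl'
    have hch1 : ((K.choose 2 : ℝ)) = (K : ℝ) * ((K : ℝ) - 1) / 2 := by
      rw [Nat.cast_choose_two]
    have hch2 : ((L.choose 2 : ℝ)) = (L : ℝ) * ((L : ℝ) - 1) / 2 := by
      rw [Nat.cast_choose_two]
    rw [hch1, hch2] at hckl'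
    replace hckl := hckl'
    have hfactor : (K : ℝ) * (L : ℝ) * ((K : ℝ) - (L : ℝ))
        * (d (x ^ 2) - (x * d x + x * d x)) = 0 := by
      linear_combination 2 * hckl
    have hne : (K : ℝ) * (L : ℝ) * ((K : ℝ) - (L : ℝ)) ≠ 0 := by
      have h1 : (K : ℝ) ≠ 0 := by positivity
      have h2 : (L : ℝ) ≠ 0 := by positivity
      have h3 : (K : ℝ) - (L : ℝ) ≠ 0 := by
        have : (K : ℝ) < (L : ℝ) := by exact_mod_cast hKL
        linarith
      exact mul_ne_zero (mul_ne_zero h1 h2) h3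
    have := (mul_eq_zero.mp hfactor).resolve_left hne
    have hx2 : x * x = x ^ 2 := by ring
    rw [hx2]
    linarith [this]
  · have hK1 : K = 1 := by omega
    subst hK1
    have hfilter1 : ((range (L + 3)) ×ˢ (range 2)).filter
        (fun ai => (L + 2 - ai.1) + (1 - ai.2) = 1 + L)
        = ({((1 : ℕ), (1 : ℕ)), (2, 0)} : Finset (ℕ × ℕ)) := by
      ext ⟨k, i⟩
      simp only [Finset.mem_filter, Finset.mem_product, Finset.mem_range, Finset.mem_insert,
        Finset.mem_singleton, Prod.mk.injEq]
      omega
    have hc1v : c1 (1 + L) = ((L : ℝ) + 2) * 1 * x * d x + (((L + 2).choose 2 : ℝ)) * x ^ 2 * d 1 := by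
      rw [hc1]
      simp only
      rw [hfilter1]
      rw [Finset.sum_insert (by decide), Finset.sum_singleton]
      simp only [Nat.choose_zero_right, Nat.choose_one_right, Nat.choose_self, pow_zero, pow_one]
      push_cast
      ring
    have hckl' : (L : ℝ) * c1 (1 + L) - ((1 : ℕ) : ℝ) * c2 (1 + L) = 0 := hckl
    rw [hc1v, hc2v, hd1] at hckl'
    simp only [mul_zero, add_zero] at hckl'
    have hch2 : ((L.choose 2 : ℝ)) = (L : ℝ) * ((L : ℝ) - 1) / 2 := by
      rw [Nat.cast_choose_two]
    rw [hch2] at hckl'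
    replace hckl := hckl'
    have hfactor : (L : ℝ) * ((1 : ℝ) - (L : ℝ))
        * (d (x ^ 2) - (x * d x + x * d x)) = 0 := by
      push_cast at hckl ⊢
      linear_combination 2 * hckl
    have hne : (L : ℝ) * ((1 : ℝ) - (L : ℝ)) ≠ 0 := by
      have h2 : (L : ℝ) ≠ 0 := by positivity
      have h3 : (1 : ℝ) - (L : ℝ) ≠ 0 := by
        have : (1 : ℝ) < (L : ℝ) := by exact_mod_cast hKL
        linarith
      exact mul_ne_zero h2 h3
    have := (mul_eq_zero.mp hfactor).resolve_left hne
    have hx2 : x * x = x ^ 2 := by ring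
    rw [hx2]
    linarith [this]


private lemma pos_case (d : ℝ → ℝ) (hd : ∀ x y : ℝ, d (x + y) = d x + d y)
    (K L : ℤ) (h0K : 0 < K) (hKL : K < L)
    (hrel : ∀ v : ℝ, v ≠ 0 →
      (L : ℝ) * v ^ (L - 1) * d (v ^ K) - (K : ℝ) * v ^ (K - 1) * d (v ^ L) = 0) :
    ∀ x : ℝ, d (x * x) = x * d x + x * d x := by
  set K' : ℕ := K.toNat with hK'
  set L' : ℕ := L.toNat with hL'
  have hKZ : (K' : ℤ) = K := Int.toNat_of_nonneg (by omega)
  have hLZ : (L' : ℤ) = L := Int.toNat_of_nonneg (by omega)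
  apply cascade d hd K' L' (by omega) (by omega)
  intro v hv
  have h := hrel v hv
  have eK : v ^ (K : ℤ) = v ^ K' := by rw [← zpow_natCast]; congr 1; omega
  have eL : v ^ (L : ℤ) = v ^ L' := by rw [← zpow_natCast]; congr 1; omega
  have eK1 : v ^ (K - 1 : ℤ) = v ^ (K' - 1 : ℕ) := by rw [← zpow_natCast]; congr 1; omega
  have eL1 : v ^ (L - 1 : ℤ) = v ^ (L' - 1 : ℕ) := by rw [← zpow_natCast]; congr 1; omega
  have cK : ((K' : ℕ) : ℝ) = (K : ℝ) := by exact_mod_cast congrArg (fun z : ℤ => (z : ℝ)) hKZ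
  have cL : ((L' : ℕ) : ℝ) = (L : ℝ) := by exact_mod_cast congrArg (fun z : ℤ => (z : ℝ)) hLZ
  rw [eK, eL, eK1, eL1] at h
  rw [cK, cL]
  linarith [h]

private lemma neg_case (d : ℝ → ℝ) (hd : ∀ x y : ℝ, d (x + y) = d x + d y)
    (K L : ℤ) (hL0 : L < 0) (hKL : K < L)
    (hrel : ∀ v : ℝ, v ≠ 0 →
      (L : ℝ) * v ^ (L - 1) * d (v ^ K) - (K : ℝ) * v ^ (K - 1) * d (v ^ L) = 0) :
    ∀ x : ℝ, d (x * x) = x * d x + x * d x := by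
  apply pos_case d hd (-L) (-K) (by omega) (by omega)
  intro v hv
  have h := hrel v⁻¹ (inv_ne_zero hv)
  have einv : ∀ n : ℤ, (v⁻¹) ^ n = v ^ (-n) := by
    intro n
    rw [inv_zpow, ← zpow_neg]
  rw [einv, einv, einv, einv] at h
  have m1 : v ^ (-(L - 1)) * v ^ (-2 : ℤ) = v ^ (-L - 1) := by
    rw [← zpow_add₀ hv]; congr 1; ring
  have m2 : v ^ (-(K - 1)) * v ^ (-2 : ℤ) = v ^ (-K - 1) := by
    rw [← zpow_add₀ hv]; congr 1; ring
  have key : (L : ℝ) * v ^ (-L - 1) * d (v ^ (-K)) - (K : ℝ) * v ^ (-K - 1) * d (v ^ (-L)) = 0 := by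
    rw [← m1, ← m2]
    calc (L : ℝ) * (v ^ (-(L - 1)) * v ^ (-2 : ℤ)) * d (v ^ (-K))
          - (K : ℝ) * (v ^ (-(K - 1)) * v ^ (-2 : ℤ)) * d (v ^ (-L))
        = ((L : ℝ) * v ^ (-(L - 1)) * d (v ^ (-K))
            - (K : ℝ) * v ^ (-(K - 1)) * d (v ^ (-L))) * v ^ (-2 : ℤ) := by ring
      _ = 0 := by rw [h, zero_mul]
  have hcast1 : ((-K : ℤ) : ℝ) = -(K : ℝ) := by push_cast; ring
  have hcast2 : ((-L : ℤ) : ℝ) = -(L : ℝ) := by push_cast; ring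
  rw [hcast1, hcast2]
  linear_combination key

private lemma invert_rel (d : ℝ → ℝ)
    (K L : ℤ)
    (hrel : ∀ v : ℝ, v ≠ 0 →
      (L : ℝ) * v ^ (L - 1) * d (v ^ K) - (K : ℝ) * v ^ (K - 1) * d (v ^ L) = 0) :
    ∀ v : ℝ, v ≠ 0 →
      ((-K : ℤ) : ℝ) * v ^ (-K - 1) * d (v ^ (-L))
        - ((-L : ℤ) : ℝ) * v ^ (-L - 1) * d (v ^ (-K)) = 0 := by
  intro v hv
  have h := hrel v⁻¹ (inv_ne_zero hv)
  have einv : ∀ n : ℤ, (v⁻¹) ^ n = v ^ (-n) := by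
    intro n
    rw [inv_zpow, ← zpow_neg]
  rw [einv, einv, einv, einv] at h
  have m1 : v ^ (-(L - 1)) * v ^ (-2 : ℤ) = v ^ (-L - 1) := by
    rw [← zpow_add₀ hv]; congr 1; ring
  have m2 : v ^ (-(K - 1)) * v ^ (-2 : ℤ) = v ^ (-K - 1) := by
    rw [← zpow_add₀ hv]; congr 1; ring
  have key : (L : ℝ) * v ^ (-L - 1) * d (v ^ (-K)) - (K : ℝ) * v ^ (-K - 1) * d (v ^ (-L)) = 0 := by
    rw [← m1, ← m2]
    calc (L : ℝ) * (v ^ (-(L - 1)) * v ^ (-2 : ℤ)) * d (v ^ (-K))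
          - (K : ℝ) * (v ^ (-(K - 1)) * v ^ (-2 : ℤ)) * d (v ^ (-L))
        = ((L : ℝ) * v ^ (-(L - 1)) * d (v ^ (-K))
            - (K : ℝ) * v ^ (-(K - 1)) * d (v ^ (-L))) * v ^ (-2 : ℤ) := by ring
      _ = 0 := by rw [h, zero_mul]
  have hcast1 : ((-K : ℤ) : ℝ) = -(K : ℝ) := by push_cast; ring
  have hcast2 : ((-L : ℤ) : ℝ) = -(L : ℝ) := by push_cast; ring
  rw [hcast1, hcast2]
  linear_combination key

private lemma mixed_case (d : ℝ → ℝ) (hd : ∀ x y : ℝ, d (x + y) = d x + d y)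
    (K L : ℤ) (hK0 : K < 0) (h0L : 0 < L)
    (hrel : ∀ v : ℝ, v ≠ 0 →
      (L : ℝ) * v ^ (L - 1) * d (v ^ K) - (K : ℝ) * v ^ (K - 1) * d (v ^ L) = 0) :
    ∀ x : ℝ, d (x * x) = x * d x + x * d x := by
  by_cases hKL : K = -L
  · -- symmetric case : reduce to the classical reciprocal equation on positive reals
    subst hKL
    -- square-free form of the relation
    have hform : ∀ v : ℝ, v ≠ 0 → (v ^ (L : ℤ) * v ^ (L : ℤ)) * d (v ^ (-L)) + d (v ^ (L : ℤ)) = 0 := by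
      intro v hv
      have h := hrel v hv
      have hLne : (L : ℝ) ≠ 0 := by
        have : (0 : ℝ) < (L : ℝ) := by exact_mod_cast h0L
        linarith
      -- h : L * v ^ (L - 1) * d (v ^ (-L)) - (-L) * v ^ (-L - 1) * d (v ^ L) = 0
      have hmul := congrArg (fun z : ℝ => z * (v ^ (L + 1 : ℤ) * (L : ℝ)⁻¹)) h
      simp only [zero_mul] at hmul
      have e1 : v ^ (L - 1 : ℤ) * v ^ (L + 1 : ℤ) = v ^ (L : ℤ) * v ^ (L : ℤ) := by
        rw [← zpow_add₀ hv, ← zpow_add₀ hv]; congr 1; ring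
      have e2 : v ^ (-L - 1 : ℤ) * v ^ (L + 1 : ℤ) = 1 := by
        rw [← zpow_add₀ hv]
        have : (-L - 1) + (L + 1) = 0 := by ring
        rw [this, zpow_zero]
      calc (v ^ (L : ℤ) * v ^ (L : ℤ)) * d (v ^ (-L)) + d (v ^ (L : ℤ))
          = ((L : ℝ) * v ^ (L - 1 : ℤ) * d (v ^ (-L)) - ((-L : ℤ) : ℝ) * v ^ (-L - 1 : ℤ) * d (v ^ (L : ℤ)))
              * (v ^ (L + 1 : ℤ) * (L : ℝ)⁻¹)
            + (1 - v ^ (-L - 1 : ℤ) * v ^ (L + 1 : ℤ)) * d (v ^ (L : ℤ))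
            + (v ^ (L : ℤ) * v ^ (L : ℤ) - v ^ (L - 1 : ℤ) * v ^ (L + 1 : ℤ) * ((L : ℝ) * (L : ℝ)⁻¹))
              * d (v ^ (-L)) := by
            push_cast
            field_simp
            ring
        _ = 0 := by
            rw [h, e2, e1, mul_inv_cancel₀ hLne]
            ring
    -- transfer to the reciprocal equation on positive reals
    have heq : ∀ y : ℝ, 0 < y → (y * y) * d y⁻¹ + d y = 0 := by
      intro y hy
      set v : ℝ := y ^ ((L : ℝ)⁻¹) with hvdef
      have hv0 : 0 < v := Real.rpow_pos_of_pos hy _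
      have hvne : v ≠ 0 := ne_of_gt hv0
      have hLne : (L : ℝ) ≠ 0 := by
        have : (0 : ℝ) < (L : ℝ) := by exact_mod_cast h0L
        linarith
      have hvL : v ^ (L : ℤ) = y := by
        rw [← Real.rpow_intCast v L, hvdef, ← Real.rpow_mul (le_of_lt hy)]
        push_cast
        rw [inv_mul_cancel₀ hLne, Real.rpow_one]
      have hvnegL : v ^ (-L : ℤ) = y⁻¹ := by
        rw [zpow_neg, hvL]
      have := hform v hvne
      rw [hvL, hvnegL] at this
      exact this
    have hd1 : d 1 = 0 := by
      have := heq 1 one_pos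
      rw [inv_one] at this
      linarith
    have hneg : ∀ x : ℝ, d (-x) = -d x := by
      intro x
      have h0 : d 0 = 0 := by
        have := hd 0 0
        simp at this
        linarith
      have := hd x (-x)
      rw [add_neg_cancel, h0] at this
      linarith
    have hsub : ∀ a b : ℝ, d (a - b) = d a - d b := by
      intro a b
      have := hd (a - b) b
      rw [sub_add_cancel] at this
      linarith
    have hpos : ∀ x : ℝ, 0 < x → d (x * x) = x * d x + x * d x := by
      intro x hx
      have hx0 : x ≠ 0 := ne_of_gt hx
      have hx1 : (0 : ℝ) < x + 1 := by linarith
      have hx1' : x + 1 ≠ 0 := ne_of_gt hx1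
      have hA := heq x hx
      have hB := heq (x + 1) hx1
      have hC := heq (x * (x + 1)) (by positivity)
      have hdx1 : d (x + 1) = d x := by
        rw [hd x 1, hd1, add_zero]
      rw [hdx1] at hB
      have hargC : d (x * (x + 1)) = d (x * x) + d x := by
        have harg : x * (x + 1) = x * x + x := by ring
        rw [harg, hd]
      rw [hargC] at hC
      have hinv : (x * (x + 1))⁻¹ = x⁻¹ - (x + 1)⁻¹ := by
        field_simp
        ring
      rw [hinv, hsub] at hC
      -- hC : (x*(x+1))*(x*(x+1)) * (d x⁻¹ - d (x+1)⁻¹) + (d (x*x) + d x) = 0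
      linear_combination hC - ((x + 1) * (x + 1)) * hA + (x * x) * hB
    intro x
    rcases lt_trichotomy x 0 with hx | hx | hx
    · have hx' : 0 < -x := by linarith
      have := hpos (-x) hx'
      have harg : (-x) * (-x) = x * x := by ring
      rw [harg, hneg] at this
      rw [this]
      ring
    · subst hx
      have h0 : d 0 = 0 := by
        have := hd 0 0
        simp at this
        linarith
      rw [mul_zero, h0]
      ring
    · exact hpos x hx
  · -- asymmetric case : pass to the pair (K², L²)
    have hrel2 := invert_rel d K L hrel
    -- derived relation for the positive pair (K*K, L*L)
    have hsquare : ∀ w : ℝ, w ≠ 0 →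
        (L * L : ℝ) * w ^ (L * L - 1) * d (w ^ (K * K))
          - (K * K : ℝ) * w ^ (K * K - 1) * d (w ^ (L * L)) = 0 := by
      intro w hw
      have hwL : w ^ (L : ℤ) ≠ 0 := zpow_ne_zero _ hw
      have hwK : w ^ (-K : ℤ) ≠ 0 := zpow_ne_zero _ hw
      have hR1 := hrel (w ^ (L : ℤ)) hwL
      have hR2 := hrel2 (w ^ (-K : ℤ)) hwK
      -- rewrite nested powers
      have comp : ∀ m n : ℤ, (w ^ (m : ℤ)) ^ (n : ℤ) = w ^ (m * n) := by
        intro m n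
        rw [zpow_mul]
      rw [comp, comp, comp, comp] at hR1
      rw [comp, comp, comp, comp] at hR2
      -- hR1 : L * w^(L*(L-1)) * d (w^(L*K)) - K * w^(L*(K-1)) * d (w^(L*L)) = 0
      -- hR2 : (-K) * w^((-K)*(-K-1)) * d (w^((-K)*(-L))) - (-L) * w^((-K)*(-L-1)) * d (w^((-K)*(-K))) = 0
      have hcastK : ((-K : ℤ) : ℝ) = -(K : ℝ) := by push_cast; ring
      have hcastL : ((-L : ℤ) : ℝ) = -(L : ℝ) := by push_cast; ring
      rw [hcastK, hcastL] at hR2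
      have hexp1 : (-K : ℤ) * (-L) = L * K := by ring
      have hexp2 : (-K : ℤ) * (-K) = K * K := by ring
      rw [hexp1, hexp2] at hR2
      -- combine : multiply hR1 by K * w^((-K)*(-K-1)) and hR2 by L * w^(L*(L-1))
      set Z := d (w ^ (L * K)) with hZ
      set X := d (w ^ (K * K)) with hX
      set Y := d (w ^ (L * L)) with hY
      -- from hR1 : L * w^(L*(L-1)) * Z = K * w^(L*(K-1)) * Y
      -- from hR2 : (-K) * w^((-K)*(-K-1)) * Z = (-L) * w^((-K)*(-L-1)) * X
      have hcomb : (K : ℝ) * w ^ ((-K) * (-K - 1)) * ((K : ℝ) * w ^ (L * (K - 1)) * Y)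
          = (L : ℝ) * w ^ (L * (L - 1)) * ((L : ℝ) * w ^ ((-K) * (-L - 1)) * X) := by
        calc (K : ℝ) * w ^ ((-K) * (-K - 1)) * ((K : ℝ) * w ^ (L * (K - 1)) * Y)
            = (K : ℝ) * w ^ ((-K) * (-K - 1)) * ((L : ℝ) * w ^ (L * (L - 1)) * Z)
              - (K : ℝ) * w ^ ((-K) * (-K - 1)) *
                ((L : ℝ) * w ^ (L * (L - 1)) * Z - (K : ℝ) * w ^ (L * (K - 1)) * Y) := by ring
          _ = (L : ℝ) * w ^ (L * (L - 1)) * ((K : ℝ) * w ^ ((-K) * (-K - 1)) * Z)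
              - (K : ℝ) * w ^ ((-K) * (-K - 1)) * 0 := by rw [← hR1]; ring
          _ = (L : ℝ) * w ^ (L * (L - 1)) * ((L : ℝ) * w ^ ((-K) * (-L - 1)) * X)
              + (L : ℝ) * w ^ (L * (L - 1)) *
                (((-(K : ℝ)) * w ^ ((-K) * (-K - 1)) * Z) - (-(L : ℝ)) * w ^ ((-K) * (-L - 1)) * X)
                * (-1) := by ring
          _ = (L : ℝ) * w ^ (L * (L - 1)) * ((L : ℝ) * w ^ ((-K) * (-L - 1)) * X) := by
              rw [hR2]; ring
      -- normalize the exponents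
      have hδ1 : w ^ ((-K) * (-K - 1)) * w ^ (L * (K - 1)) = w ^ (K * K - 1) * w ^ (K + L * K - L + 1) := by
        rw [← zpow_add₀ hw, ← zpow_add₀ hw]; congr 1; ring
      have hδ2 : w ^ (L * (L - 1)) * w ^ ((-K) * (-L - 1)) = w ^ (L * L - 1) * w ^ (K + L * K - L + 1) := by
        rw [← zpow_add₀ hw, ← zpow_add₀ hw]; congr 1; ring
      have hfin : ((K : ℝ) * K * (w ^ (K * K - 1) * Y) - (L : ℝ) * L * (w ^ (L * L - 1) * X))
          * w ^ (K + L * K - L + 1) = 0 := by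
        calc ((K : ℝ) * K * (w ^ (K * K - 1) * Y) - (L : ℝ) * L * (w ^ (L * L - 1) * X))
              * w ^ (K + L * K - L + 1)
            = (K : ℝ) * K * ((w ^ (K * K - 1) * w ^ (K + L * K - L + 1)) * Y)
              - (L : ℝ) * L * ((w ^ (L * L - 1) * w ^ (K + L * K - L + 1)) * X) := by ring
          _ = (K : ℝ) * K * ((w ^ ((-K) * (-K - 1)) * w ^ (L * (K - 1))) * Y)
              - (L : ℝ) * L * ((w ^ (L * (L - 1)) * w ^ ((-K) * (-L - 1))) * X) := by
              rw [hδ1, hδ2]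
          _ = 0 := by linear_combination hcomb
      have hwk := zpow_ne_zero (K + L * K - L + 1) hw
      have hfin2 := (mul_eq_zero.mp hfin).resolve_right hwk
      push_cast
      linear_combination -hfin2
    -- dispatch on the ordering of K*K and L*L
    have hKK : (0 : ℤ) < K * K := mul_pos_of_neg_of_neg hK0 hK0
    have hLL : (0 : ℤ) < L * L := mul_pos h0L h0L
    rcases lt_trichotomy (K * K) (L * L) with hlt | heq' | hgt
    · apply pos_case d hd (K * K) (L * L) hKK hlt
      intro v hv
      have := hsquare v hv
      push_cast at this ⊢
      linear_combination this
    · exfalso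
      have : K = -L ∨ K = L := by
        have h1 : (K - L) * (K + L) = 0 := by linear_combination heq'
        rcases mul_eq_zero.mp h1 with h | h
        · right; omega
        · left; omega
      rcases this with h | h
      · exact hKL h
      · omega
    · apply pos_case d hd (L * L) (K * K) hLL hgt
      intro v hv
      have := hsquare v hv
      push_cast at this ⊢
      linear_combination -this

private lemma dispatch (d : ℝ → ℝ) (hd : ∀ x y : ℝ, d (x + y) = d x + d y)
    (K L : ℤ) (hK0 : K ≠ 0) (hL0 : L ≠ 0) (hKL : K < L)
    (hrel : ∀ v : ℝ, v ≠ 0 →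
      (L : ℝ) * v ^ (L - 1) * d (v ^ K) - (K : ℝ) * v ^ (K - 1) * d (v ^ L) = 0) :
    ∀ x : ℝ, d (x * x) = x * d x + x * d x := by
  rcases lt_trichotomy K 0 with hK | hK | hK
  · rcases lt_trichotomy L 0 with hL | hL | hL
    · exact neg_case d hd K L hL hKL hrel
    · exact absurd hL hL0
    · exact mixed_case d hd K L hK hL hrel
  · exact absurd hK hK0
  · exact pos_case d hd K L hK hKL hrel


/-- If an additive function `d` derivates `P ∘ Q⁻¹` on `Q(I)`, where `P`, `Q` are Laurent
polynomials with rational coefficients on a nonempty open interval `I` not containing `0`,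
`Q'` is nowhere zero on `I`, and `P - p₀`, `Q - q₀` are linearly independent, then `d` is
a standard derivation. -/
theorem stmt_18 (d : ℝ → ℝ) (hd : ∀ x y : ℝ, d (x + y) = d x + d y)
    (a b : ℝ) (hab : a < b) (h0 : (0 : ℝ) ∉ Set.Ioo a b)
    (p q : ℤ → ℚ) (hp : (Function.support p).Finite) (hq : (Function.support q).Finite)
    (P Q P' Q' Qinv : ℝ → ℝ)
    (hP : ∀ u : ℝ, P u = ∑ᶠ k : ℤ, (p k : ℝ) * u ^ k)
    (hQ : ∀ u : ℝ, Q u = ∑ᶠ k : ℤ, (q k : ℝ) * u ^ k)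
    (hP' : ∀ u : ℝ, P' u = ∑ᶠ k : ℤ, (p k : ℝ) * (k : ℝ) * u ^ (k - 1))
    (hQ' : ∀ u : ℝ, Q' u = ∑ᶠ k : ℤ, (q k : ℝ) * (k : ℝ) * u ^ (k - 1))
    (hQ'ne : ∀ u ∈ Set.Ioo a b, Q' u ≠ 0)
    (hQinv : ∀ u ∈ Set.Ioo a b, Qinv (Q u) = u)
    (hindep : ¬ ∃ c₁ c₂ : ℝ, (c₁, c₂) ≠ (0, 0) ∧ ∀ u ∈ Set.Ioo a b,
      c₁ * (P u - (p 0 : ℝ)) + c₂ * (Q u - (q 0 : ℝ)) = 0)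
    (hder : ∀ v ∈ Q '' Set.Ioo a b,
      d (P (Qinv v)) = P' (Qinv v) * (1 / Q' (Qinv v)) * d v) :
    ∀ x y : ℝ, d (x * y) = d x * y + x * d y := by
  classical
  apply leibniz_of_sq d hd
  -- the master coefficient relations
  have getstar : ∀ s : Finset ℤ, hp.toFinset ⊆ s → hq.toFinset ⊆ s →
      ∀ v : ℝ, v ≠ 0 → ∀ n : ℤ,
      ∑ kj ∈ (s ×ˢ s).filter (fun kj => kj.1 + kj.2 - 1 = n),
        ((p kj.1 : ℝ) * (q kj.2 : ℝ)) *
          ((kj.2 : ℝ) * v ^ (kj.2 - 1) * d (v ^ kj.1)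
            - (kj.1 : ℝ) * v ^ (kj.1 - 1) * d (v ^ kj.2)) = 0 := by
    intro s hps hqs
    exact star_lemma d hd a b hab h0 p q s
      (derive_hE d hd a b h0 p q hp hq P Q P' Q' Qinv hP hQ hP' hQ' hQ'ne hQinv hder s hps hqs)
  have hpair := exists_pair a b hab p q hp hq P Q hP hQ hindep
  -- column membership helper
  have hcolmem : ∀ k : ℤ, (p k ≠ 0 ∨ q k ≠ 0) → k ∈ hp.toFinset ∪ hq.toFinset := by
    intro k hk
    rcases hk with hk | hk
    · exact Finset.mem_union_left _ (by simpa using hk)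
    · exact Finset.mem_union_right _ (by simpa using hk)
  have hcol : ∀ k l : ℤ, p k * q l - p l * q k ≠ 0 →
      (p k ≠ 0 ∨ q k ≠ 0) ∧ (p l ≠ 0 ∨ q l ≠ 0) := by
    intro k l h
    constructor
    · by_contra hcc
      push_neg at hcc
      exact h (by rw [hcc.1, hcc.2]; ring)
    · by_contra hcc
      push_neg at hcc
      exact h (by rw [hcc.1, hcc.2]; ring)
  -- step 1 : the primary extremal pair, possibly involving the index 0
  obtain ⟨κ, lam, hκlam, hwκ, hextall⟩ := exists_extremal₀ p q hp hq hpair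
  -- a clean two-term relation for a pair of nonzero indices, after establishing d 1 = 0
  -- if necessary
  have hclean : ∃ K L : ℤ, K ≠ 0 ∧ L ≠ 0 ∧ K < L ∧
      (∀ v : ℝ, v ≠ 0 →
        (L : ℝ) * v ^ (L - 1) * d (v ^ K) - (K : ℝ) * v ^ (K - 1) * d (v ^ L) = 0) := by
    by_cases hzero : κ = 0 ∨ lam = 0
    · -- the primary pair contains zero : deduce d 1 = 0 first
      have hd1 : d 1 = 0 := by
        rcases hzero with rfl | rfl
        · -- κ = 0, c := lam
          have hlam0 : lam ≠ 0 := by omega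
          set s : Finset ℤ := (hp.toFinset ∪ hq.toFinset) ∪ {0, lam} with hsdef
          have hstar := getstar s
            (Finset.Subset.trans Finset.subset_union_left Finset.subset_union_left)
            (Finset.Subset.trans Finset.subset_union_right Finset.subset_union_left)
            1 one_ne_zero (lam - 1)
          have hrel0 := relation_R0 d p q s lam hlam0
            (Finset.mem_union_right _ (by simp))
            (Finset.mem_union_right _ (by simp))
            (fun k j hkj hsum h1 h2 => hextall k j hkj (by omega) h1 h2)
            1 one_ne_zero hstar
          rw [one_zpow] at hrel0
          have hwcast : ((p 0 * q lam - p lam * q 0 : ℚ) : ℝ) ≠ 0 := by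
            rw [Rat.cast_ne_zero]
            exact hwκ
          have hlamcast : ((lam : ℤ) : ℝ) ≠ 0 := by
            exact_mod_cast hlam0
          have := mul_eq_zero.mp hrel0
          rcases this with h | h
          · rcases mul_eq_zero.mp h with h' | h'
            · rcases mul_eq_zero.mp h' with h'' | h''
              · exact absurd h'' hlamcast
              · exact absurd h'' hwcast
            · exact absurd h' one_ne_zero
          · exact h
        · -- lam = 0, c := κ
          have hκ0 : κ ≠ 0 := by omega
          set s : Finset ℤ := (hp.toFinset ∪ hq.toFinset) ∪ {0, κ} with hsdef
          have hstar := getstar s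
            (Finset.Subset.trans Finset.subset_union_left Finset.subset_union_left)
            (Finset.Subset.trans Finset.subset_union_right Finset.subset_union_left)
            1 one_ne_zero (κ - 1)
          have hrel0 := relation_R0 d p q s κ hκ0
            (Finset.mem_union_right _ (by simp))
            (Finset.mem_union_right _ (by simp))
            (fun k j hkj hsum h1 h2 => hextall k j hkj (by omega) h2 h1)
            1 one_ne_zero hstar
          rw [one_zpow] at hrel0
          have hwcast : ((p 0 * q κ - p κ * q 0 : ℚ) : ℝ) ≠ 0 := by
            rw [Rat.cast_ne_zero]
            intro hcc
            apply hwκ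
            linear_combination -hcc
          have hκcast : ((κ : ℤ) : ℝ) ≠ 0 := by
            exact_mod_cast hκ0
          have := mul_eq_zero.mp hrel0
          rcases this with h | h
          · rcases mul_eq_zero.mp h with h' | h'
            · rcases mul_eq_zero.mp h' with h'' | h''
              · exact absurd h'' hκcast
              · exact absurd h'' hwcast
            · exact absurd h' one_ne_zero
          · exact h
      -- now take a secondary pair avoiding zero
      obtain ⟨k₁, l₀, hk₁0, hl₀0, hk₁l₀, hw₁, hext⟩ := exists_extremal p q hp hq hpair
      refine ⟨k₁, l₀, hk₁0, hl₀0, hk₁l₀, ?_⟩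
      intro v hv
      set s : Finset ℤ := (hp.toFinset ∪ hq.toFinset) ∪ {0, k₁ + l₀, k₁, l₀} with hsdef
      have hstar := getstar s
        (Finset.Subset.trans Finset.subset_union_left Finset.subset_union_left)
        (Finset.Subset.trans Finset.subset_union_right Finset.subset_union_left)
        v hv (k₁ + l₀ - 1)
      have hrel := relation_R d p q s k₁ l₀ hk₁0 hl₀0 hk₁l₀
        (Finset.mem_union_right _ (by simp))
        (Finset.mem_union_right _ (by simp))
        (Finset.mem_union_right _ (by simp))
        (Finset.mem_union_right _ (by simp))
        hext v hv hstar
      rw [hd1, mul_zero, add_zero] at hrel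
      have hwcast : ((p k₁ * q l₀ - p l₀ * q k₁ : ℚ) : ℝ) ≠ 0 := by
        rw [Rat.cast_ne_zero]; exact hw₁
      have := (mul_eq_zero.mp hrel).resolve_left hwcast
      linear_combination this
    · -- primary pair avoids zero : the zero-pair coefficient vanishes by extremality
      push_neg at hzero
      obtain ⟨hκ0, hlam0⟩ := hzero
      refine ⟨κ, lam, hκ0, hlam0, hκlam, ?_⟩
      intro v hv
      set s : Finset ℤ := (hp.toFinset ∪ hq.toFinset) ∪ {0, κ + lam, κ, lam} with hsdef
      have hstar := getstar s
        (Finset.Subset.trans Finset.subset_union_left Finset.subset_union_left)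
        (Finset.Subset.trans Finset.subset_union_right Finset.subset_union_left)
        v hv (κ + lam - 1)
      have hrel := relation_R d p q s κ lam hκ0 hlam0 hκlam
        (Finset.mem_union_right _ (by simp))
        (Finset.mem_union_right _ (by simp))
        (Finset.mem_union_right _ (by simp))
        (Finset.mem_union_right _ (by simp))
        (fun k j _ _ hkj hsum h1 h2 => hextall k j hkj hsum h1 h2) v hv hstar
      have hzterm : ((κ + lam : ℤ) : ℝ) * ((p 0 * q (κ + lam) - p (κ + lam) * q 0 : ℚ) : ℝ)
          * v ^ (κ + lam - 1) * d 1 = 0 := by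
        by_cases hm : κ + lam = 0
        · rw [hm]
          simp
        · have hw0 : p 0 * q (κ + lam) - p (κ + lam) * q 0 = 0 := by
            apply hextall 0 (κ + lam) (by omega) (by omega)
            · rintro ⟨h1, h2⟩
              exact hκ0 h1.symm
            · rintro ⟨h1, h2⟩
              exact hlam0 h1.symm
          rw [hw0]
          simp
      rw [hzterm, add_zero] at hrel
      have hwcast : ((p κ * q lam - p lam * q κ : ℚ) : ℝ) ≠ 0 := by
        rw [Rat.cast_ne_zero]; exact hwκ
      have := (mul_eq_zero.mp hrel).resolve_left hwcast
      linear_combination this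
  obtain ⟨K, L, hK0, hL0, hKL, hrel⟩ := hclean
  exact dispatch d hd K L hK0 hL0 hKL hrel
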